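/- For every prime power q ≥ 5, the Levi graph LG_q admits a proper distinguishing 3-coloring in which all line-vertices receive one single color and the point-vertices are partitioned into the other two color classes. -/

import Mathlib

set_option linter.unusedSectionVars false
set_option maxHeartbeats 1000000
open Module Submodule

variable {F : Type} [Field F]

def pt (u : Fin 3 → F) : Submodule F (Fin 3 → F) := F ∙ u
def Pp (x : F) : Submodule F (Fin 3 → F) := pt ![x, 0, 1]
def Rp (y : F) : Submodule F (Fin 3 → F) := pt ![0, y, 1]
def Sp (m : F) : Submodule F (Fin 3 → F) := pt ![1, m, 0]
def E1p : Submodule F (Fin 3 → F) := pt ![0, 1, 0]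
def lineL0 : Submodule F (Fin 3 → F) := span F {![1,0,0], ![0,1,0]}
def lineL1 : Submodule F (Fin 3 → F) := span F {![1,0,0], ![0,0,1]}
def lineL2 : Submodule F (Fin 3 → F) := span F {![0,1,0], ![0,0,1]}
def lineT (x y : F) : Submodule F (Fin 3 → F) := span F {![x,0,1], ![0,y,1]}

lemma vec3_eq_iff (a b c d e f : F) : ![a,b,c] = ![d,e,f] ↔ a = d ∧ b = e ∧ c = f := by
  constructor
  · intro h
    exact ⟨congrFun h 0, congrFun h 1, congrFun h 2⟩
  · rintro ⟨rfl, rfl, rfl⟩; rfl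

lemma smul3 (a x y z : F) : a • (![x, y, z] : Fin 3 → F) = ![a*x, a*y, a*z] := by
  funext i; fin_cases i <;> simp [Matrix.smul_cons]

lemma add3 (x y z x' y' z' : F) :
    (![x, y, z] : Fin 3 → F) + ![x', y', z'] = ![x+x', y+y', z+z'] := by
  funext i; fin_cases i <;> simp

lemma pt_le_pair {u v w : Fin 3 → F} (a b : F) (h : a • u + b • v = w) :
    pt w ≤ span F {u, v} := by
  rw [pt, span_singleton_le_iff_mem]
  exact Submodule.mem_span_pair.mpr ⟨a, b, h⟩

lemma mem_pair_iff {u v w : Fin 3 → F} :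
    pt w ≤ span F {u, v} ↔ ∃ a b : F, a • u + b • v = w := by
  rw [pt, span_singleton_le_iff_mem]
  exact Submodule.mem_span_pair

lemma vec3_ne_zero_of (a b c : F) (i : Fin 3) (h : ![a,b,c] i ≠ 0) :
    (![a,b,c] : Fin 3 → F) ≠ 0 := by
  intro h0; rw [h0] at h; exact h rfl

lemma pt_rank {u : Fin 3 → F} (h : u ≠ 0) : finrank F (pt u) = 1 :=
  finrank_span_singleton h

lemma Pp_rank (x : F) : finrank F (Pp x) = 1 :=
  pt_rank (vec3_ne_zero_of _ _ _ 2 (by exact one_ne_zero))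
lemma Rp_rank (y : F) : finrank F (Rp y) = 1 :=
  pt_rank (vec3_ne_zero_of _ _ _ 2 (by exact one_ne_zero))
lemma Sp_rank (m : F) : finrank F (Sp m) = 1 :=
  pt_rank (vec3_ne_zero_of _ _ _ 0 (by norm_num))
lemma E1p_rank : finrank F (E1p : Submodule F (Fin 3 → F)) = 1 :=
  pt_rank (vec3_ne_zero_of _ _ _ 1 (by norm_num))

lemma rank_pair {u v : Fin 3 → F} (h : LinearIndependent F ![u, v]) :
    finrank F (span F {u, v} : Submodule F (Fin 3 → F)) = 2 := by
  have hs : ({u, v} : Set (Fin 3 → F)) = Set.range ![u, v] := by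
    rw [Set.pair_comm]; simp [Matrix.range_cons, Matrix.range_empty]
  rw [hs, finrank_span_eq_card h]
  simp

lemma indep_of_scalars {u v : Fin 3 → F}
    (h : ∀ a b : F, a • u + b • v = 0 → a = 0 ∧ b = 0) : LinearIndependent F ![u, v] :=
  LinearIndependent.pair_iff.mpr h

lemma lineL0_rank : finrank F (lineL0 : Submodule F (Fin 3 → F)) = 2 := by
  apply rank_pair; apply indep_of_scalars
  intro a b h
  rw [smul3, smul3, add3, show (0 : Fin 3 → F) = ![0,0,0] from (by funext i; fin_cases i <;> simp), vec3_eq_iff] at h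
  obtain ⟨h1, h2, _⟩ := h
  constructor <;> [skip; skip] <;> simp_all

lemma lineL1_rank : finrank F (lineL1 : Submodule F (Fin 3 → F)) = 2 := by
  apply rank_pair; apply indep_of_scalars
  intro a b h
  rw [smul3, smul3, add3, show (0 : Fin 3 → F) = ![0,0,0] from (by funext i; fin_cases i <;> simp), vec3_eq_iff] at h
  obtain ⟨h1, _, h3⟩ := h
  constructor <;> simp_all

lemma lineL2_rank : finrank F (lineL2 : Submodule F (Fin 3 → F)) = 2 := by
  apply rank_pair; apply indep_of_scalars
  intro a b h
  rw [smul3, smul3, add3, show (0 : Fin 3 → F) = ![0,0,0] from (by funext i; fin_cases i <;> simp), vec3_eq_iff] at h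
  obtain ⟨_, h2, h3⟩ := h
  constructor <;> simp_all

lemma lineT_rank {x y : F} (hx : x ≠ 0) : finrank F (lineT x y : Submodule F (Fin 3 → F)) = 2 := by
  apply rank_pair; apply indep_of_scalars
  intro a b h
  rw [smul3, smul3, add3, show (0 : Fin 3 → F) = ![0,0,0] from (by funext i; fin_cases i <;> simp), vec3_eq_iff] at h
  obtain ⟨h1, _, h3⟩ := h
  have ha : a = 0 := by
    have : a * x = 0 := by linear_combination h1
    rcases mul_eq_zero.mp this with h | h
    · exact h
    · exact absurd h hx
  constructor
  · exact ha
  · rw [ha] at h3; simpa using h3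

-- zero vector rewriting helper
lemma zero3 : (0 : Fin 3 → F) = ![0,0,0] := by funext i; fin_cases i <;> simp

lemma pt_le_single_iff {u v : Fin 3 → F} : pt u ≤ pt v ↔ ∃ a : F, a • v = u := by
  rw [pt, pt, span_singleton_le_iff_mem, mem_span_singleton]

-- memberships
lemma Pp_le_L1 (x : F) : Pp x ≤ lineL1 :=
  pt_le_pair x 1 (by rw [smul3, smul3, add3, vec3_eq_iff]; norm_num)
lemma Rp_le_L2 (y : F) : Rp y ≤ lineL2 :=
  pt_le_pair y 1 (by rw [smul3, smul3, add3, vec3_eq_iff]; norm_num)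
lemma Sp_le_L0 (m : F) : Sp m ≤ lineL0 :=
  pt_le_pair 1 m (by rw [smul3, smul3, add3, vec3_eq_iff]; norm_num)
lemma E1p_le_L0 : (E1p : Submodule F (Fin 3 → F)) ≤ lineL0 :=
  pt_le_pair 0 1 (by rw [smul3, smul3, add3, vec3_eq_iff]; norm_num)
lemma E1p_le_L2 : (E1p : Submodule F (Fin 3 → F)) ≤ lineL2 :=
  pt_le_pair 1 0 (by rw [smul3, smul3, add3, vec3_eq_iff]; norm_num)
lemma Pp_le_T (x y : F) : Pp x ≤ lineT x y :=
  pt_le_pair 1 0 (by rw [smul3, smul3, add3, vec3_eq_iff]; norm_num)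
lemma Rp_le_T (x y : F) : Rp y ≤ lineT x y :=
  pt_le_pair 0 1 (by rw [smul3, smul3, add3, vec3_eq_iff]; norm_num)
lemma Sp_le_T {x y m : F} (hx : x ≠ 0) (h : m * x + y = 0) : Sp m ≤ lineT x y :=
  pt_le_pair x⁻¹ (-x⁻¹) (by
    rw [smul3, smul3, add3, vec3_eq_iff]
    refine ⟨by field_simp; ring, ?_, by ring⟩
    field_simp
    linear_combination -h)

-- non/conditional memberships
lemma not_Pp_le_L0 (x : F) : ¬ Pp x ≤ lineL0 := by
  rw [Pp, lineL0, mem_pair_iff]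
  rintro ⟨a, b, h⟩
  rw [smul3, smul3, add3, vec3_eq_iff] at h
  obtain ⟨_, _, h3⟩ := h
  simp at h3

lemma not_Rp_le_L0 (y : F) : ¬ Rp y ≤ lineL0 := by
  rw [Rp, lineL0, mem_pair_iff]
  rintro ⟨a, b, h⟩
  rw [smul3, smul3, add3, vec3_eq_iff] at h
  obtain ⟨_, _, h3⟩ := h
  simp at h3

lemma not_Sp_le_L2 (m : F) : ¬ Sp m ≤ lineL2 := by
  rw [Sp, lineL2, mem_pair_iff]
  rintro ⟨a, b, h⟩
  rw [smul3, smul3, add3, vec3_eq_iff] at h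
  obtain ⟨h1, _, _⟩ := h
  simp at h1

lemma not_E1p_le_L1 : ¬ (E1p : Submodule F (Fin 3 → F)) ≤ lineL1 := by
  rw [E1p, lineL1, mem_pair_iff]
  rintro ⟨a, b, h⟩
  rw [smul3, smul3, add3, vec3_eq_iff] at h
  obtain ⟨_, h2, _⟩ := h
  simp at h2

lemma Pp_le_L2_iff (x : F) : Pp x ≤ lineL2 ↔ x = 0 := by
  constructor
  · rw [Pp, lineL2, mem_pair_iff]
    rintro ⟨a, b, h⟩
    rw [smul3, smul3, add3, vec3_eq_iff] at h
    obtain ⟨h1, _, _⟩ := h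
    linear_combination -h1
  · rintro rfl
    exact pt_le_pair 0 1 (by rw [smul3, smul3, add3, vec3_eq_iff]; norm_num)

lemma Rp_le_L1_iff (y : F) : Rp y ≤ lineL1 ↔ y = 0 := by
  constructor
  · rw [Rp, lineL1, mem_pair_iff]
    rintro ⟨a, b, h⟩
    rw [smul3, smul3, add3, vec3_eq_iff] at h
    obtain ⟨_, h2, _⟩ := h
    linear_combination -h2
  · rintro rfl
    exact pt_le_pair 0 1 (by rw [smul3, smul3, add3, vec3_eq_iff]; norm_num)

lemma Sp_le_L1_iff (m : F) : Sp m ≤ lineL1 ↔ m = 0 := by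
  constructor
  · rw [Sp, lineL1, mem_pair_iff]
    rintro ⟨a, b, h⟩
    rw [smul3, smul3, add3, vec3_eq_iff] at h
    obtain ⟨_, h2, _⟩ := h
    linear_combination -h2
  · rintro rfl
    exact pt_le_pair 1 0 (by rw [smul3, smul3, add3, vec3_eq_iff]; norm_num)

lemma Pp_le_T_iff {x' y' : F} (hy' : y' ≠ 0) (x : F) : Pp x ≤ lineT x' y' ↔ x = x' := by
  constructor
  · rw [Pp, lineT, mem_pair_iff]
    rintro ⟨a, b, h⟩
    rw [smul3, smul3, add3, vec3_eq_iff] at h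
    obtain ⟨h1, h2, h3⟩ := h
    have hb : b = 0 := by
      rcases mul_eq_zero.mp (by linear_combination h2 : b * y' = 0) with h | h
      · exact h
      · exact absurd h hy'
    have ha : a = 1 := by rw [hb] at h3; linear_combination h3
    rw [hb, ha] at h1; linear_combination -h1
  · rintro rfl; exact Pp_le_T _ _

lemma Rp_le_T_iff {x' y' : F} (hx' : x' ≠ 0) (y : F) : Rp y ≤ lineT x' y' ↔ y = y' := by
  constructor
  · rw [Rp, lineT, mem_pair_iff]
    rintro ⟨a, b, h⟩
    rw [smul3, smul3, add3, vec3_eq_iff] at h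
    obtain ⟨h1, h2, h3⟩ := h
    have ha : a = 0 := by
      rcases mul_eq_zero.mp (by linear_combination h1 : a * x' = 0) with h | h
      · exact h
      · exact absurd h hx'
    have hb : b = 1 := by rw [ha] at h3; linear_combination h3
    rw [ha, hb] at h2; linear_combination -h2
  · rintro rfl; exact Rp_le_T _ _

lemma Sp_le_T_iff {x' y' : F} (hx' : x' ≠ 0) (m : F) :
    Sp m ≤ lineT x' y' ↔ m * x' + y' = 0 := by
  constructor
  · rw [Sp, lineT, mem_pair_iff]
    rintro ⟨a, b, h⟩
    rw [smul3, smul3, add3, vec3_eq_iff] at h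
    obtain ⟨h1, h2, h3⟩ := h
    have hb : b = -a := by linear_combination h3
    rw [hb] at h2
    linear_combination (-y') * h1 - x' * h2
  · intro h; exact Sp_le_T hx' h

lemma not_E1p_le_T {x y : F} (hx : x ≠ 0) : ¬ (E1p : Submodule F (Fin 3 → F)) ≤ lineT x y := by
  rw [E1p, lineT, mem_pair_iff]
  rintro ⟨a, b, h⟩
  rw [smul3, smul3, add3, vec3_eq_iff] at h
  obtain ⟨h1, h2, h3⟩ := h
  have ha : a = 0 := by
    rcases mul_eq_zero.mp (by linear_combination h1 : a * x = 0) with h | h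
    · exact h
    · exact absurd h hx
  have hb : b = 0 := by rw [ha] at h3; linear_combination h3
  rw [ha, hb] at h2
  simp at h2

-- point equalities
lemma Pp_eq_iff (x x' : F) : Pp x = Pp x' ↔ x = x' := by
  constructor
  · intro h
    have := pt_le_single_iff.mp (le_of_eq h)
    obtain ⟨a, ha⟩ := this
    rw [smul3, vec3_eq_iff] at ha
    obtain ⟨h1, _, h3⟩ := ha
    have : a = 1 := by linear_combination h3
    rw [this] at h1; linear_combination -h1
  · rintro rfl; rfl

lemma Rp_eq_iff (y y' : F) : Rp y = Rp y' ↔ y = y' := by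
  constructor
  · intro h
    obtain ⟨a, ha⟩ := pt_le_single_iff.mp (le_of_eq h)
    rw [smul3, vec3_eq_iff] at ha
    obtain ⟨_, h2, h3⟩ := ha
    have : a = 1 := by linear_combination h3
    rw [this] at h2; linear_combination -h2
  · rintro rfl; rfl

lemma Sp_eq_iff (m m' : F) : Sp m = Sp m' ↔ m = m' := by
  constructor
  · intro h
    obtain ⟨a, ha⟩ := pt_le_single_iff.mp (le_of_eq h)
    rw [smul3, vec3_eq_iff] at ha
    obtain ⟨h1, h2, _⟩ := ha
    have : a = 1 := by linear_combination h1
    rw [this] at h2; linear_combination -h2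
  · rintro rfl; rfl

lemma Pp_eq_Rp_iff (x y : F) : Pp x = Rp y ↔ x = 0 ∧ y = 0 := by
  constructor
  · intro h
    obtain ⟨a, ha⟩ := pt_le_single_iff.mp (le_of_eq h)
    rw [smul3, vec3_eq_iff] at ha
    obtain ⟨h1, h2, h3⟩ := ha
    have : a = 1 := by linear_combination h3
    rw [this] at h1 h2
    exact ⟨by linear_combination -h1, by linear_combination h2⟩
  · rintro ⟨rfl, rfl⟩; rfl

lemma Pp_ne_Sp (x m : F) : Pp x ≠ Sp m := by
  intro h
  obtain ⟨a, ha⟩ := pt_le_single_iff.mp (le_of_eq h)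
  rw [smul3, vec3_eq_iff] at ha
  obtain ⟨_, _, h3⟩ := ha
  simp at h3

lemma Rp_ne_Sp (y m : F) : Rp y ≠ Sp m := by
  intro h
  obtain ⟨a, ha⟩ := pt_le_single_iff.mp (le_of_eq h)
  rw [smul3, vec3_eq_iff] at ha
  obtain ⟨_, _, h3⟩ := ha
  simp at h3

lemma E1p_ne_Pp (x : F) : (E1p : Submodule F (Fin 3 → F)) ≠ Pp x := by
  intro h
  obtain ⟨a, ha⟩ := pt_le_single_iff.mp (le_of_eq h)
  rw [smul3, vec3_eq_iff] at ha
  obtain ⟨_, h2, _⟩ := ha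
  simp at h2

lemma E1p_ne_Rp (y : F) : (E1p : Submodule F (Fin 3 → F)) ≠ Rp y := by
  intro h
  obtain ⟨a, ha⟩ := pt_le_single_iff.mp (le_of_eq h)
  rw [smul3, vec3_eq_iff] at ha
  obtain ⟨_, h2, h3⟩ := ha
  have ha0 : a = 0 := by linear_combination h3
  rw [ha0] at h2
  simp at h2

lemma E1p_ne_Sp (m : F) : (E1p : Submodule F (Fin 3 → F)) ≠ Sp m := by
  intro h
  obtain ⟨a, ha⟩ := pt_le_single_iff.mp (le_of_eq h)
  rw [smul3, vec3_eq_iff] at ha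
  obtain ⟨h1, h2, _⟩ := ha
  have ha0 : a = 0 := by linear_combination h1
  rw [ha0] at h2
  simp at h2

-- line distinctness
lemma L0_ne_L1 : (lineL0 : Submodule F (Fin 3 → F)) ≠ lineL1 := by
  intro h
  exact not_Pp_le_L0 (0 : F) (h ▸ Pp_le_L1 0)
lemma L0_ne_L2 : (lineL0 : Submodule F (Fin 3 → F)) ≠ lineL2 := by
  intro h
  exact not_Pp_le_L0 (0 : F) (h ▸ ((Pp_le_L2_iff (0:F)).mpr rfl))
lemma L1_ne_L2 : (lineL1 : Submodule F (Fin 3 → F)) ≠ lineL2 := by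
  intro h
  exact not_Sp_le_L2 (0 : F) (h ▸ ((Sp_le_L1_iff (0:F)).mpr rfl))
lemma T_ne_L0 {x y : F} (hy : y ≠ 0) : lineT x y ≠ (lineL0 : Submodule F (Fin 3 → F)) := by
  intro h
  exact not_Pp_le_L0 x (h ▸ Pp_le_T x y)
lemma T_ne_L1 {x y : F} (hx : x ≠ 0) (hy : y ≠ 0) :
    lineT x y ≠ (lineL1 : Submodule F (Fin 3 → F)) := by
  intro h
  exact hy ((Rp_le_L1_iff y).mp (h ▸ Rp_le_T x y))
lemma T_ne_L2 {x y : F} (hx : x ≠ 0) : lineT x y ≠ (lineL2 : Submodule F (Fin 3 → F)) := by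
  intro h
  exact hx ((Pp_le_L2_iff x).mp (h ▸ Pp_le_T x y))


local notation "V3" => (Fin 3 → F)

lemma unique_line {P Q L L' : Submodule F V3} (hPQ : P ≠ Q)
    (hP : finrank F P = 1) (hQ : finrank F Q = 1)
    (hL : finrank F L = 2) (hL' : finrank F L' = 2)
    (h1 : P ≤ L) (h2 : Q ≤ L) (h3 : P ≤ L') (h4 : Q ≤ L') : L = L' := by
  have hinf : P ⊓ Q = ⊥ := by
    by_contra hne
    have h1' : finrank F (P ⊓ Q : Submodule F V3) ≤ 1 := hP ▸ Submodule.finrank_mono inf_le_left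
    have hpos : 0 < finrank F (P ⊓ Q : Submodule F V3) := by
      rw [Nat.pos_iff_ne_zero]
      intro h0
      exact hne (Submodule.finrank_eq_zero.mp h0)
    have e1 : P ⊓ Q = P := eq_of_le_of_finrank_le inf_le_left (by omega)
    have e2 : P ⊓ Q = Q := eq_of_le_of_finrank_le inf_le_right (by omega)
    exact hPQ (e1 ▸ e2)
  have hsup : finrank F (P ⊔ Q : Submodule F V3) = 2 := by
    have := Submodule.finrank_sup_add_finrank_inf_eq P Q
    rw [hinf] at this
    simp only [finrank_bot] at this
    omega
  have e1 : P ⊔ Q = L := eq_of_le_of_finrank_le (sup_le h1 h2) (by omega)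
  have e2 : P ⊔ Q = L' := eq_of_le_of_finrank_le (sup_le h3 h4) (by omega)
  exact e1 ▸ e2

lemma unique_point {P Q L L' : Submodule F V3} (hLL' : L ≠ L')
    (hP : finrank F P = 1) (hQ : finrank F Q = 1)
    (hL : finrank F L = 2) (hL' : finrank F L' = 2)
    (h1 : P ≤ L) (h2 : P ≤ L') (h3 : Q ≤ L) (h4 : Q ≤ L') : P = Q := by
  by_contra hne
  exact hLL' (unique_line hne hP hQ hL hL' h1 h3 h2 h4)

lemma exists_two_points {L : Submodule F V3} (hL : finrank F L = 2) :
    ∃ u v : Fin 3 → F, u ≠ 0 ∧ v ≠ 0 ∧ (F ∙ u) ≠ (F ∙ v) ∧ (F ∙ u) ≤ L ∧ (F ∙ v) ≤ L := by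
  let b := Module.finBasisOfFinrankEq F L hL
  refine ⟨((b 0 : L) : Fin 3 → F), ((b 1 : L) : Fin 3 → F), ?_, ?_, ?_, ?_, ?_⟩
  · exact fun h => b.ne_zero 0 (Subtype.ext h)
  · exact fun h => b.ne_zero 1 (Subtype.ext h)
  · intro h
    have h0 : ((b 0 : L) : Fin 3 → F) ∈ (F ∙ ((b 1 : L) : Fin 3 → F)) := by
      rw [← h]; exact mem_span_singleton_self _
    rw [mem_span_singleton] at h0
    obtain ⟨a, ha⟩ := h0
    have hb : (b 0) = a • (b 1) := Subtype.ext (by exact ha.symm)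
    have h1 : (b.repr (b 0)) 0 = 1 := by rw [Basis.repr_self]; simp
    have h2 : (b.repr (a • b 1)) 0 = 0 := by
      rw [map_smul, Basis.repr_self]
      simp [Finsupp.single_apply]
    rw [hb, h2] at h1
    exact one_ne_zero h1.symm
  · rw [span_singleton_le_iff_mem]; exact (b 0).2
  · rw [span_singleton_le_iff_mem]; exact (b 1).2

lemma rank1_span {W : Submodule F V3} (hW : finrank F W = 1) :
    ∃ u : Fin 3 → F, u ≠ 0 ∧ W = F ∙ u := by
  let b := Module.finBasisOfFinrankEq F W hW
  have hb0 : ((b 0 : W) : Fin 3 → F) ≠ 0 := fun h => b.ne_zero 0 (Subtype.ext h)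
  refine ⟨(b 0 : W), hb0, ?_⟩
  refine (eq_of_le_of_finrank_le ?_ ?_).symm
  · rw [span_singleton_le_iff_mem]; exact (b 0).2
  · rw [finrank_span_singleton hb0, hW]


/-! ### extra geometry for the closure argument -/

def lineV (x : F) : Submodule F (Fin 3 → F) := span F {![x,0,1], ![0,1,0]}
def lineU1 : Submodule F (Fin 3 → F) := span F {![0,1,1], ![1,0,0]}
def lineD : Submodule F (Fin 3 → F) := span F {![0,0,1], ![1,1,1]}
def lineJ (s : F) : Submodule F (Fin 3 → F) := span F {![s,0,1], ![1,1,1]}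
def lineW (t s : F) : Submodule F (Fin 3 → F) := span F {![t,t,1], ![s-1,-1,0]}
def lineG (x y : F) : Submodule F (Fin 3 → F) := span F {![x-y,0,1], ![1,1,0]}
def lineE (m : F) : Submodule F (Fin 3 → F) := span F {![0,0,1], ![1,m,1]}

lemma pt_def (u : Fin 3 → F) : pt u = F ∙ u := rfl
lemma Pp_def (x : F) : Pp x = pt ![x,0,1] := rfl
lemma Sp_def (m : F) : Sp m = pt ![1,m,0] := rfl
lemma E1p_def : (E1p : Submodule F (Fin 3 → F)) = pt ![0,1,0] := rfl

lemma aff_rank (x y : F) : finrank F (pt ![x,y,1]) = 1 :=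
  pt_rank (vec3_ne_zero_of _ _ _ 2 (by exact one_ne_zero))
lemma ds_rank (s : F) : finrank F (pt ![s-1,-1,0]) = 1 :=
  pt_rank (vec3_ne_zero_of _ _ _ 1 (by norm_num))

lemma pt_smul_eq {u : Fin 3 → F} (c : F) (hc : c ≠ 0) : pt (c • u) = pt u := by
  rw [pt, pt]
  exact Submodule.span_singleton_smul_eq (IsUnit.mk0 c hc) u

lemma lineV_rank (x : F) : finrank F (lineV x : Submodule F (Fin 3 → F)) = 2 := by
  apply rank_pair; apply indep_of_scalars
  intro a b h
  rw [smul3, smul3, add3, zero3, vec3_eq_iff] at h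
  obtain ⟨_, h2, h3⟩ := h
  constructor
  · linear_combination h3
  · linear_combination h2

lemma lineU1_rank : finrank F (lineU1 : Submodule F (Fin 3 → F)) = 2 := by
  apply rank_pair; apply indep_of_scalars
  intro a b h
  rw [smul3, smul3, add3, zero3, vec3_eq_iff] at h
  obtain ⟨h1, h2, _⟩ := h
  constructor
  · linear_combination h2
  · linear_combination h1

lemma lineD_rank : finrank F (lineD : Submodule F (Fin 3 → F)) = 2 := by
  apply rank_pair; apply indep_of_scalars
  intro a b h
  rw [smul3, smul3, add3, zero3, vec3_eq_iff] at h
  obtain ⟨h1, _, h3⟩ := h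
  have hb : b = 0 := by linear_combination h1
  constructor
  · rw [hb] at h3; linear_combination h3
  · exact hb

lemma lineJ_rank (s : F) : finrank F (lineJ s : Submodule F (Fin 3 → F)) = 2 := by
  apply rank_pair; apply indep_of_scalars
  intro a b h
  rw [smul3, smul3, add3, zero3, vec3_eq_iff] at h
  obtain ⟨_, h2, h3⟩ := h
  have hb : b = 0 := by linear_combination h2
  constructor
  · rw [hb] at h3; linear_combination h3
  · exact hb

lemma lineW_rank (t s : F) : finrank F (lineW t s : Submodule F (Fin 3 → F)) = 2 := by
  apply rank_pair; apply indep_of_scalars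
  intro a b h
  rw [smul3, smul3, add3, zero3, vec3_eq_iff] at h
  obtain ⟨_, h2, h3⟩ := h
  have ha : a = 0 := by linear_combination h3
  constructor
  · exact ha
  · rw [ha] at h2; linear_combination -h2

lemma lineG_rank (x y : F) : finrank F (lineG x y : Submodule F (Fin 3 → F)) = 2 := by
  apply rank_pair; apply indep_of_scalars
  intro a b h
  rw [smul3, smul3, add3, zero3, vec3_eq_iff] at h
  obtain ⟨_, h2, h3⟩ := h
  have hb : b = 0 := by linear_combination h2
  constructor
  · rw [hb] at h3; linear_combination h3
  · exact hb

lemma lineE_rank (m : F) : finrank F (lineE m : Submodule F (Fin 3 → F)) = 2 := by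
  apply rank_pair; apply indep_of_scalars
  intro a b h
  rw [smul3, smul3, add3, zero3, vec3_eq_iff] at h
  obtain ⟨h1, _, h3⟩ := h
  have hb : b = 0 := by linear_combination h1
  constructor
  · rw [hb] at h3; linear_combination h3
  · exact hb

-- memberships
lemma Pp_le_V (x : F) : Pp x ≤ lineV x :=
  pt_le_pair 1 0 (by rw [smul3, smul3, add3, vec3_eq_iff]; norm_num)
lemma E1p_le_V (x : F) : (E1p : Submodule F (Fin 3 → F)) ≤ lineV x :=
  pt_le_pair 0 1 (by rw [smul3, smul3, add3, vec3_eq_iff]; norm_num)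
lemma aff_le_V (x y : F) : pt ![x,y,1] ≤ lineV x :=
  pt_le_pair 1 y (by rw [smul3, smul3, add3, vec3_eq_iff]; norm_num)
lemma Rp_one_le_U1 : Rp (1 : F) ≤ lineU1 :=
  pt_le_pair 1 0 (by rw [smul3, smul3, add3, vec3_eq_iff]; norm_num)
lemma E0_le_U1 : Sp (0:F) ≤ lineU1 :=
  pt_le_pair 0 1 (by rw [smul3, smul3, add3, vec3_eq_iff]; norm_num)
lemma U_le_U1 : pt ![(1:F),1,1] ≤ lineU1 :=
  pt_le_pair 1 1 (by rw [smul3, smul3, add3, vec3_eq_iff]; norm_num)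
lemma not_E1p_le_U1 : ¬ (E1p : Submodule F (Fin 3 → F)) ≤ lineU1 := by
  rw [E1p, lineU1, mem_pair_iff]
  rintro ⟨a, b, h⟩
  rw [smul3, smul3, add3, vec3_eq_iff] at h
  obtain ⟨h1, h2, h3⟩ := h
  have : a = 0 := by linear_combination h3
  rw [this] at h2
  simp at h2
lemma Pp0_le_D : Pp (0:F) ≤ lineD :=
  pt_le_pair 1 0 (by rw [smul3, smul3, add3, vec3_eq_iff]; norm_num)
lemma U_le_D : pt ![(1:F),1,1] ≤ lineD :=
  pt_le_pair 0 1 (by rw [smul3, smul3, add3, vec3_eq_iff]; norm_num)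
lemma Dt_le_D (t : F) : pt ![t,t,1] ≤ lineD :=
  pt_le_pair (1-t) t (by rw [smul3, smul3, add3, vec3_eq_iff]; constructor; ring; constructor <;> ring)
lemma Sp1_le_D : Sp (1:F) ≤ lineD :=
  pt_le_pair (-1) 1 (by rw [smul3, smul3, add3, vec3_eq_iff]; norm_num)
lemma not_E1p_le_D : ¬ (E1p : Submodule F (Fin 3 → F)) ≤ lineD := by
  rw [E1p, lineD, mem_pair_iff]
  rintro ⟨a, b, h⟩
  rw [smul3, smul3, add3, vec3_eq_iff] at h
  obtain ⟨h1, h2, _⟩ := h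
  have : b = 0 := by linear_combination h1
  rw [this] at h2
  simp at h2
lemma not_Pp0_le_L0 : ¬ Pp (0:F) ≤ lineL0 := not_Pp_le_L0 0
lemma Pp_le_J (s : F) : Pp s ≤ lineJ s :=
  pt_le_pair 1 0 (by rw [smul3, smul3, add3, vec3_eq_iff]; norm_num)
lemma U_le_J (s : F) : pt ![(1:F),1,1] ≤ lineJ s :=
  pt_le_pair 0 1 (by rw [smul3, smul3, add3, vec3_eq_iff]; norm_num)
lemma ds_le_J (s : F) : pt ![s-1,-1,0] ≤ lineJ s :=
  pt_le_pair 1 (-1) (by rw [smul3, smul3, add3, vec3_eq_iff]; refine ⟨by ring, by ring, by ring⟩)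
lemma ds_le_L0 (s : F) : pt ![s-1,-1,0] ≤ lineL0 :=
  pt_le_pair (s-1) (-1) (by rw [smul3, smul3, add3, vec3_eq_iff]; refine ⟨by ring, by ring, by ring⟩)
lemma not_z1_le_L0 (x y : F) : ¬ pt ![x,y,1] ≤ lineL0 := by
  rw [lineL0, mem_pair_iff]
  rintro ⟨a, b, h⟩
  rw [smul3, smul3, add3, vec3_eq_iff] at h
  obtain ⟨_, _, h3⟩ := h
  simp at h3
lemma Dt_le_W (t s : F) : pt ![t,t,1] ≤ lineW t s :=
  pt_le_pair 1 0 (by rw [smul3, smul3, add3, vec3_eq_iff]; norm_num)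
lemma ds_le_W (t s : F) : pt ![s-1,-1,0] ≤ lineW t s :=
  pt_le_pair 0 1 (by rw [smul3, smul3, add3, vec3_eq_iff]; norm_num)
lemma Pts_le_W (t s : F) : Pp (t*s) ≤ lineW t s :=
  pt_le_pair 1 t (by rw [smul3, smul3, add3, vec3_eq_iff]; refine ⟨by ring, by ring, by ring⟩)
lemma aff_le_L1_iff (x y : F) : pt ![x,y,1] ≤ lineL1 ↔ y = 0 := by
  constructor
  · rw [lineL1, mem_pair_iff]
    rintro ⟨a, b, h⟩
    rw [smul3, smul3, add3, vec3_eq_iff] at h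
    obtain ⟨_, h2, _⟩ := h
    linear_combination -h2
  · rintro rfl
    exact pt_le_pair x 1 (by rw [smul3, smul3, add3, vec3_eq_iff]; norm_num)
lemma Dt_ne_ds (t s s' : F) : pt ![t,t,1] ≠ pt ![s'-1,-1,0] := by
  intro h
  obtain ⟨a, ha⟩ := pt_le_single_iff.mp (le_of_eq h)
  rw [smul3, vec3_eq_iff] at ha
  obtain ⟨_, _, h3⟩ := ha
  simp at h3
lemma Pp_ne_U (s : F) : Pp s ≠ pt ![(1:F),1,1] := by
  intro h
  obtain ⟨a, ha⟩ := pt_le_single_iff.mp (le_of_eq h)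
  rw [smul3, vec3_eq_iff] at ha
  obtain ⟨_, h2, h3⟩ := ha
  rw [show a = 1 by linear_combination h3] at h2
  simp at h2
lemma Pp_le_G (x y : F) : Pp (x - y) ≤ lineG x y :=
  pt_le_pair 1 0 (by rw [smul3, smul3, add3, vec3_eq_iff]; norm_num)
lemma aff_le_G (x y : F) : pt ![x,y,1] ≤ lineG x y :=
  pt_le_pair 1 y (by rw [smul3, smul3, add3, vec3_eq_iff]; refine ⟨by ring, by ring, by ring⟩)
lemma Sp1_le_G (x y : F) : Sp (1:F) ≤ lineG x y :=
  pt_le_pair 0 1 (by rw [smul3, smul3, add3, vec3_eq_iff]; norm_num)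
lemma not_E1p_le_G (x y : F) : ¬ (E1p : Submodule F (Fin 3 → F)) ≤ lineG x y := by
  rw [E1p, lineG, mem_pair_iff]
  rintro ⟨a, b, h⟩
  rw [smul3, smul3, add3, vec3_eq_iff] at h
  obtain ⟨h1, h2, h3⟩ := h
  have ha : a = 0 := by linear_combination h3
  rw [ha] at h1 h2
  simp only [zero_mul, zero_add] at h1 h2
  rw [mul_one] at h1 h2
  rw [h1] at h2
  simp at h2
lemma Pp0_le_E (m : F) : Pp (0:F) ≤ lineE m :=
  pt_le_pair 1 0 (by rw [smul3, smul3, add3, vec3_eq_iff]; norm_num)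
lemma aff1m_le_E (m : F) : pt ![(1:F),m,1] ≤ lineE m :=
  pt_le_pair 0 1 (by rw [smul3, smul3, add3, vec3_eq_iff]; norm_num)
lemma Sp_le_E (m : F) : Sp m ≤ lineE m :=
  pt_le_pair (-1) 1 (by rw [smul3, smul3, add3, vec3_eq_iff]; refine ⟨by ring, by ring, by ring⟩)
lemma Pp0_ne_aff1m (m : F) : Pp (0:F) ≠ pt ![(1:F),m,1] := by
  intro h
  obtain ⟨a, ha⟩ := pt_le_single_iff.mp (le_of_eq h)
  rw [smul3, vec3_eq_iff] at ha
  obtain ⟨h1, _, h3⟩ := ha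
  rw [show a = 1 by linear_combination h3] at h1
  simp at h1


attribute [irreducible] pt Pp Rp Sp E1p lineL0 lineL1 lineL2 lineT lineV lineU1 lineD lineJ lineW lineG lineE

/-! ### The configuration -/

def NS (α : F) : Set (Submodule F (Fin 3 → F)) :=
  {Pp 0, Pp 1, Pp α, Pp (α^2), Rp 1, Rp α, Sp (-1), Sp (-α), Sp (-(α^2)⁻¹)}

section Config

variable {α : F} (hα0 : α ≠ 0) (hα1 : α ≠ 1) (hα2 : α^2 ≠ 1) (hα3 : α^3 ≠ 1)

lemma NS_elim {W : Submodule F (Fin 3 → F)} (h : W ∈ NS α) :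
    W = Pp 0 ∨ W = Pp 1 ∨ W = Pp α ∨ W = Pp (α^2) ∨ W = Rp 1 ∨ W = Rp α ∨
    W = Sp (-1) ∨ W = Sp (-α) ∨ W = Sp (-(α^2)⁻¹) := by
  simp only [NS, Set.mem_insert_iff, Set.mem_singleton_iff] at h
  exact h

lemma NS_class {W : Submodule F (Fin 3 → F)} (h : W ∈ NS α) :
    (∃ x, (x = 0 ∨ x = 1 ∨ x = α ∨ x = α^2) ∧ W = Pp x) ∨
    (∃ y, (y = 1 ∨ y = α) ∧ W = Rp y) ∨
    (∃ m, (m = -1 ∨ m = -α ∨ m = -(α^2)⁻¹) ∧ W = Sp m) := by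
  rcases NS_elim h with rfl|rfl|rfl|rfl|rfl|rfl|rfl|rfl|rfl
  · exact Or.inl ⟨0, by tauto⟩
  · exact Or.inl ⟨1, by tauto⟩
  · exact Or.inl ⟨α, by tauto⟩
  · exact Or.inl ⟨α^2, by tauto⟩
  · exact Or.inr (Or.inl ⟨1, by tauto⟩)
  · exact Or.inr (Or.inl ⟨α, by tauto⟩)
  · exact Or.inr (Or.inr ⟨-1, by tauto⟩)
  · exact Or.inr (Or.inr ⟨-α, by tauto⟩)
  · exact Or.inr (Or.inr ⟨-(α^2)⁻¹, by tauto⟩)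

include hα0 hα1 hα2 hα3

-- rank-1 of NS members
lemma NS_rank1 {W : Submodule F (Fin 3 → F)} (h : W ∈ NS α) : finrank F W = 1 := by
  rcases NS_elim h with rfl|rfl|rfl|rfl|rfl|rfl|rfl|rfl|rfl <;>
    first | exact Pp_rank _ | exact Rp_rank _ | exact Sp_rank _

-- classification of NS members on the three coordinate lines
lemma NS_on_L1 {W : Submodule F (Fin 3 → F)} (h : W ∈ NS α) (hle : W ≤ lineL1) :
    W = Pp 0 ∨ W = Pp 1 ∨ W = Pp α ∨ W = Pp (α^2) := by
  rcases NS_elim h with rfl|rfl|rfl|rfl|rfl|rfl|rfl|rfl|rfl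
  · tauto
  · tauto
  · tauto
  · tauto
  · exact absurd ((Rp_le_L1_iff 1).mp hle) one_ne_zero
  · exact absurd ((Rp_le_L1_iff α).mp hle) hα0
  · exact absurd ((Sp_le_L1_iff (-1)).mp hle) (by simp)
  · exact absurd ((Sp_le_L1_iff (-α)).mp hle) (by simpa using hα0)
  · exact absurd ((Sp_le_L1_iff (-(α^2)⁻¹)).mp hle)
      (by simpa using (inv_ne_zero (pow_ne_zero 2 hα0)))

lemma NS_on_L2 {W : Submodule F (Fin 3 → F)} (h : W ∈ NS α) (hle : W ≤ lineL2) :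
    W = Pp 0 ∨ W = Rp 1 ∨ W = Rp α := by
  rcases NS_elim h with rfl|rfl|rfl|rfl|rfl|rfl|rfl|rfl|rfl
  · tauto
  · exact absurd ((Pp_le_L2_iff 1).mp hle) one_ne_zero
  · exact absurd ((Pp_le_L2_iff α).mp hle) hα0
  · exact absurd ((Pp_le_L2_iff (α^2)).mp hle) (pow_ne_zero 2 hα0)
  · tauto
  · tauto
  · exact absurd hle (not_Sp_le_L2 _)
  · exact absurd hle (not_Sp_le_L2 _)
  · exact absurd hle (not_Sp_le_L2 _)

lemma NS_on_L0 {W : Submodule F (Fin 3 → F)} (h : W ∈ NS α) (hle : W ≤ lineL0) :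
    W = Sp (-1) ∨ W = Sp (-α) ∨ W = Sp (-(α^2)⁻¹) := by
  rcases NS_elim h with rfl|rfl|rfl|rfl|rfl|rfl|rfl|rfl|rfl
  · exact absurd hle (not_Pp_le_L0 _)
  · exact absurd hle (not_Pp_le_L0 _)
  · exact absurd hle (not_Pp_le_L0 _)
  · exact absurd hle (not_Pp_le_L0 _)
  · exact absurd hle (not_Rp_le_L0 _)
  · exact absurd hle (not_Rp_le_L0 _)
  · tauto
  · tauto
  · tauto

lemma NS_on_T {W : Submodule F (Fin 3 → F)} {x y : F} (hx : x ≠ 0) (hy : y ≠ 0)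
    (h : W ∈ NS α) (hle : W ≤ lineT x y) :
    W = Pp x ∨ W = Rp y ∨ W = Sp (-(y/x)) := by
  have key : ∀ m : F, Sp m ≤ lineT x y → Sp m = Sp (-(y/x)) := by
    intro m hm
    have := (Sp_le_T_iff hx m).mp hm
    rw [Sp_eq_iff]
    field_simp
    linear_combination this
  rcases NS_elim h with rfl|rfl|rfl|rfl|rfl|rfl|rfl|rfl|rfl
  · exact Or.inl (by rw [(Pp_le_T_iff hy 0).mp hle])
  · exact Or.inl (by rw [(Pp_le_T_iff hy 1).mp hle])
  · exact Or.inl (by rw [(Pp_le_T_iff hy α).mp hle])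
  · exact Or.inl (by rw [(Pp_le_T_iff hy (α^2)).mp hle])
  · exact Or.inr (Or.inl (by rw [(Rp_le_T_iff hx 1).mp hle]))
  · exact Or.inr (Or.inl (by rw [(Rp_le_T_iff hx α).mp hle]))
  · exact Or.inr (Or.inr (key _ hle))
  · exact Or.inr (Or.inr (key _ hle))
  · exact Or.inr (Or.inr (key _ hle))

-- not in NS
lemma Sp0_not_NS : Sp (0:F) ∉ NS α := by
  intro h
  rcases NS_elim h with h|h|h|h|h|h|h|h|h
  · exact Pp_ne_Sp 0 0 h.symm
  · exact Pp_ne_Sp 1 0 h.symm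
  · exact Pp_ne_Sp α 0 h.symm
  · exact Pp_ne_Sp (α^2) 0 h.symm
  · exact Rp_ne_Sp 1 0 h.symm
  · exact Rp_ne_Sp α 0 h.symm
  · have := (Sp_eq_iff (0:F) (-1)).mp h
    exact one_ne_zero (by linear_combination this)
  · have := (Sp_eq_iff (0:F) (-α)).mp h
    exact hα0 (by linear_combination this)
  · have := (Sp_eq_iff (0:F) (-(α^2)⁻¹)).mp h
    have h2 : (α^2)⁻¹ = 0 := by linear_combination this
    exact (inv_ne_zero (pow_ne_zero 2 hα0)) h2

lemma E1p_not_NS : (E1p : Submodule F (Fin 3 → F)) ∉ NS α := by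
  intro h
  rcases NS_elim h with h|h|h|h|h|h|h|h|h <;>
    first
    | exact E1p_ne_Pp _ h
    | exact E1p_ne_Rp _ h
    | exact E1p_ne_Sp _ h

end Config

/-! ### Pigeonhole helpers -/

lemma four_in_three {X : Type*} {a b c w1 w2 w3 w4 : X}
    (h1 : w1 = a ∨ w1 = b ∨ w1 = c) (h2 : w2 = a ∨ w2 = b ∨ w2 = c)
    (h3 : w3 = a ∨ w3 = b ∨ w3 = c) (h4 : w4 = a ∨ w4 = b ∨ w4 = c)
    (h12 : w1 ≠ w2) (h13 : w1 ≠ w3) (h14 : w1 ≠ w4)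
    (h23 : w2 ≠ w3) (h24 : w2 ≠ w4) (h34 : w3 ≠ w4) : False := by
  rcases h1 with rfl|rfl|rfl <;> rcases h2 with rfl|rfl|rfl <;>
    rcases h3 with rfl|rfl|rfl <;> rcases h4 with rfl|rfl|rfl <;> simp_all

section Work

variable {α : F} (hα0 : α ≠ 0) (hα1 : α ≠ 1) (hα2 : α^2 ≠ 1) (hα3 : α^3 ≠ 1)

include hα0 hα1 hα2 hα3

/-- Workhorse: a rank-2 subspace containing three distinct members of `NS α` is one of the
designated lines. -/
lemma three_N_line {L w1 w2 w3 : Submodule F (Fin 3 → F)} (hL : finrank F L = 2)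
    (hm1 : w1 ∈ NS α) (hm2 : w2 ∈ NS α) (hm3 : w3 ∈ NS α)
    (h12 : w1 ≠ w2) (h13 : w1 ≠ w3) (h23 : w2 ≠ w3)
    (hle1 : w1 ≤ L) (hle2 : w2 ≤ L) (hle3 : w3 ≤ L) :
    L = lineL0 ∨ L = lineL1 ∨ L = lineL2 ∨
      (∃ x y, x ≠ 0 ∧ y ≠ 0 ∧ L = lineT x y ∧ Pp x ∈ NS α ∧ Rp y ∈ NS α ∧
        Sp (-(y/x)) ∈ NS α) := by
  set Concl := (L = lineL0 ∨ L = lineL1 ∨ L = lineL2 ∨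
      (∃ x y, x ≠ 0 ∧ y ≠ 0 ∧ L = lineT x y ∧ Pp x ∈ NS α ∧ Rp y ∈ NS α ∧
        Sp (-(y/x)) ∈ NS α)) with hConcl
  have hPP : ∀ x x' : F, Pp x ≠ Pp x' → Pp x ≤ L → Pp x' ≤ L → Concl := by
    intro x x' hne hl hl'
    rw [hConcl]
    exact Or.inr (Or.inl (unique_line hne (Pp_rank x) (Pp_rank x') hL lineL1_rank hl hl'
      (Pp_le_L1 x) (Pp_le_L1 x')))
  have hRR : ∀ y y' : F, Rp y ≠ Rp y' → Rp y ≤ L → Rp y' ≤ L → Concl := by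
    intro y y' hne hl hl'
    rw [hConcl]
    exact Or.inr (Or.inr (Or.inl (unique_line hne (Rp_rank y) (Rp_rank y') hL lineL2_rank
      hl hl' (Rp_le_L2 y) (Rp_le_L2 y'))))
  have hSS : ∀ m m' : F, Sp m ≠ Sp m' → Sp m ≤ L → Sp m' ≤ L → Concl := by
    intro m m' hne hl hl'
    rw [hConcl]
    exact Or.inl (unique_line hne (Sp_rank m) (Sp_rank m') hL lineL0_rank hl hl'
      (Sp_le_L0 m) (Sp_le_L0 m'))
  have hMix : ∀ x y m : F, (x = 0 ∨ x = 1 ∨ x = α ∨ x = α^2) → (y = 1 ∨ y = α) →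
      Pp x ∈ NS α → Rp y ∈ NS α → Sp m ∈ NS α → Pp x ≠ Rp y →
      Pp x ≤ L → Rp y ≤ L → Sp m ≤ L → Concl := by
    intro x y m hx hy hmx hmy hmm hne hl hl' hlm
    rw [hConcl]
    have hy0 : y ≠ 0 := by
      rcases hy with rfl|rfl
      · exact one_ne_zero
      · exact hα0
    rcases hx with rfl|hx'
    · refine Or.inr (Or.inr (Or.inl ?_))
      exact unique_line hne (Pp_rank 0) (Rp_rank y) hL lineL2_rank hl hl'
        ((Pp_le_L2_iff 0).mpr rfl) (Rp_le_L2 y)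
    · have hx0 : x ≠ 0 := by
        rcases hx' with rfl|rfl|rfl
        · exact one_ne_zero
        · exact hα0
        · exact pow_ne_zero 2 hα0
      have hLT : L = lineT x y :=
        unique_line hne (Pp_rank x) (Rp_rank y) hL (lineT_rank hx0) hl hl'
          (Pp_le_T x y) (Rp_le_T x y)
      have hmval : m = -(y/x) := by
        have := (Sp_le_T_iff hx0 m).mp (hLT ▸ hlm)
        field_simp
        linear_combination this
      refine Or.inr (Or.inr (Or.inr ⟨x, y, hx0, hy0, hLT, hmx, hmy, ?_⟩))
      rw [← hmval]
      exact hmm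
  rcases NS_class hm1 with ⟨x1, hx1, rfl⟩|⟨y1, hy1, rfl⟩|⟨m1, hv1, rfl⟩ <;>
    rcases NS_class hm2 with ⟨x2, hx2, rfl⟩|⟨y2, hy2, rfl⟩|⟨m2, hv2, rfl⟩ <;>
      rcases NS_class hm3 with ⟨x3, hx3, rfl⟩|⟨y3, hy3, rfl⟩|⟨m3, hv3, rfl⟩ <;>
  first
  | exact hPP _ _ h12 hle1 hle2
  | exact hPP _ _ h13 hle1 hle3
  | exact hPP _ _ h23 hle2 hle3
  | exact hRR _ _ h12 hle1 hle2
  | exact hRR _ _ h13 hle1 hle3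
  | exact hRR _ _ h23 hle2 hle3
  | exact hSS _ _ h12 hle1 hle2
  | exact hSS _ _ h13 hle1 hle3
  | exact hSS _ _ h23 hle2 hle3
  | exact hMix _ _ _ hx1 hy2 hm1 hm2 hm3 h12 hle1 hle2 hle3
  | exact hMix _ _ _ hx1 hy3 hm1 hm3 hm2 h13 hle1 hle3 hle2
  | exact hMix _ _ _ hx2 hy1 hm2 hm1 hm3 h12.symm hle2 hle1 hle3
  | exact hMix _ _ _ hx2 hy3 hm2 hm3 hm1 h23 hle2 hle3 hle1
  | exact hMix _ _ _ hx3 hy1 hm3 hm1 hm2 h13.symm hle3 hle1 hle2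
  | exact hMix _ _ _ hx3 hy2 hm3 hm2 hm1 h23.symm hle3 hle2 hle1

end Work




/-- A permutation of the vertices is an automorphism of the simple graph `G` if it
preserves adjacency (and hence non-adjacency). -/
def IsGraphAutomorphism {V : Type*} (G : SimpleGraph V) (σ : Equiv.Perm V) : Prop :=
  ∀ u v : V, G.Adj (σ u) (σ v) ↔ G.Adj u v

/-- A proper coloring is distinguishing if the only automorphism mapping every color
class to itself is the identity. -/
def IsDistinguishing {V : Type*} (G : SimpleGraph V) {α : Type*} (C : G.Coloring α) : Prop :=
  ∀ σ : Equiv.Perm V, IsGraphAutomorphism G σ → (∀ v, C (σ v) = C v) → σ = 1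

/-- The Levi graph over a field `F`: the bipartite incidence graph of the
1-dimensional subspaces (points) and 2-dimensional subspaces (lines) of `F³`,
where a point is adjacent to a line iff the point is contained in the line. -/
def LeviGraph (F : Type*) [Field F] :
    SimpleGraph {W : Submodule F (Fin 3 → F) //
      Module.finrank F W = 1 ∨ Module.finrank F W = 2} where
  Adj a b :=
    (Module.finrank F a.1 = 1 ∧ Module.finrank F b.1 = 2 ∧ a.1 ≤ b.1) ∨
    (Module.finrank F a.1 = 2 ∧ Module.finrank F b.1 = 1 ∧ b.1 ≤ a.1)
  symm := by
    refine ⟨?_⟩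
    rintro a b (⟨h1, h2, h3⟩ | ⟨h1, h2, h3⟩)
    · exact Or.inr ⟨h2, h1, h3⟩
    · exact Or.inl ⟨h2, h1, h3⟩
  loopless := by
    refine ⟨?_⟩
    rintro a (⟨h1, h2, _⟩ | ⟨h1, h2, _⟩) <;> omega

/-- For every prime power `q ≥ 5`, the Levi graph `LG_q` admits a proper distinguishing
3-coloring in which all line-vertices receive one single color and the point-vertices
are colored with the other two colors. -/
theorem stmt3 (q : ℕ) (hq : IsPrimePow q) (hq5 : 5 ≤ q)
    (F : Type) [Field F] [Fintype F] (hF : Fintype.card F = q) :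
    ∃ (C : (LeviGraph F).Coloring (Fin 3)) (c : Fin 3),
      IsDistinguishing (LeviGraph F) C ∧
      (∀ v : {W : Submodule F (Fin 3 → F) //
          Module.finrank F W = 1 ∨ Module.finrank F W = 2},
        Module.finrank F v.1 = 2 → C v = c) ∧
      (∀ v : {W : Submodule F (Fin 3 → F) //
          Module.finrank F W = 1 ∨ Module.finrank F W = 2},
        Module.finrank F v.1 = 1 → C v ≠ c) := by
  classical
  obtain ⟨g, hg⟩ := IsCyclic.exists_generator (α := Fˣ)
  have hcardu : Fintype.card Fˣ = q - 1 := by rw [Fintype.card_units, hF]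
  have hordg : orderOf g = q - 1 := by
    rw [orderOf_eq_card_of_forall_mem_zpowers hg, Nat.card_eq_fintype_card, hcardu]
  set α : F := (g : F) with hαdef
  have hαpow : ∀ k : ℕ, 0 < k → k < q - 1 → α ^ k ≠ 1 := by
    intro k hk1 hk2 h
    have hu : g ^ k = 1 := by
      apply Units.ext
      push_cast
      exact h
    have hdvd := orderOf_dvd_of_pow_eq_one hu
    rw [hordg] at hdvd
    exact absurd (Nat.le_of_dvd hk1 hdvd) (not_le.mpr hk2)
  have hα0 : α ≠ 0 := Units.ne_zero g
  have hα1 : α ≠ 1 := by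
    have := hαpow 1 (by norm_num) (by omega)
    simpa using this
  have hα2 : α ^ 2 ≠ 1 := hαpow 2 (by norm_num) (by omega)
  have hα3 : α ^ 3 ≠ 1 := hαpow 3 (by norm_num) (by omega)
  have hgen : ∀ x : F, x ≠ 0 → ∃ k : ℕ, α ^ k = x := by
    intro x hx
    lift x to Fˣ using isUnit_iff_ne_zero.mpr hx with xu
    have : xu ∈ Subgroup.zpowers g := hg xu
    rw [← mem_powers_iff_mem_zpowers] at this
    obtain ⟨k, hk⟩ := this
    exact ⟨k, by rw [← hk]; push_cast; ring⟩
  -- the coloring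
  let col : {W : Submodule F (Fin 3 → F) //
      Module.finrank F W = 1 ∨ Module.finrank F W = 2} → Fin 3 :=
    fun v => if Module.finrank F v.1 = 2 then 2 else if v.1 ∈ NS α then 0 else 1
  have hvalid : ∀ {u v}, (LeviGraph F).Adj u v → col u ≠ col v := by
    rintro u v (⟨h1, h2, _⟩ | ⟨h1, h2, _⟩) <;> simp only [col, h1, h2] <;> norm_num <;>
      split_ifs <;> decide
  let C : (LeviGraph F).Coloring (Fin 3) := SimpleGraph.Coloring.mk col hvalid
  refine ⟨C, 2, ?_, ?_, ?_⟩
  · -- distinguishing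
    intro σ hAut hCol
    have hc : ∀ v, col (σ v) = col v := hCol
    have hrk : ∀ v, Module.finrank F ((σ v).1 : Submodule F (Fin 3 → F)) =
        Module.finrank F (v.1 : Submodule F (Fin 3 → F)) := by
      intro v
      have hcv := hc v
      rcases hv2 : v.2 with h1 | h2 <;> rcases hs2 : (σ v).2 with g1 | g2
      · rw [g1, h1]
      · exfalso
        simp only [col, g2, h1] at hcv
        norm_num at hcv
        split_ifs at hcv <;> exact absurd hcv (by decide)
      · exfalso
        simp only [col, g1, h2] at hcv
        norm_num at hcv
        split_ifs at hcv <;> exact absurd hcv (by decide)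
      · rw [g2, h2]
    have hmem : ∀ v, Module.finrank F (v.1 : Submodule F (Fin 3 → F)) = 1 →
        ((σ v).1 ∈ NS α ↔ v.1 ∈ NS α) := by
      intro v h1
      have hs1 : Module.finrank F ((σ v).1 : Submodule F (Fin 3 → F)) = 1 := by
        rw [hrk v, h1]
      have hcv := hc v
      simp only [col, h1, hs1] at hcv
      norm_num at hcv
      by_cases hA : (σ v).1 ∈ NS α <;> by_cases hB : v.1 ∈ NS α
      · exact iff_of_true hA hB
      · rw [if_pos hA, if_neg hB] at hcv; exact absurd hcv (by decide)
      · rw [if_neg hA, if_pos hB] at hcv; exact absurd hcv (by decide)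
      · exact iff_of_false hA hB
    -- incidence
    have hadj : ∀ (P L : {W : Submodule F (Fin 3 → F) //
        Module.finrank F W = 1 ∨ Module.finrank F W = 2}),
        Module.finrank F (P.1 : Submodule F (Fin 3 → F)) = 1 →
        Module.finrank F (L.1 : Submodule F (Fin 3 → F)) = 2 →
        ((LeviGraph F).Adj P L ↔ P.1 ≤ L.1) := by
      intro P L h1 h2
      constructor
      · rintro (⟨_, _, h⟩ | ⟨hh, _, _⟩)
        · exact h
        · rw [h1] at hh; exact absurd hh (by norm_num)
      · intro h
        exact Or.inl ⟨h1, h2, h⟩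
    have himg_le : ∀ (W L : Submodule F (Fin 3 → F)) (hW : Module.finrank F W = 1)
        (hL : Module.finrank F L = 2), W ≤ L →
        (σ ⟨W, Or.inl hW⟩).1 ≤ (σ ⟨L, Or.inr hL⟩).1 := by
      intro W L hW hL hle
      have h1 : (LeviGraph F).Adj ⟨W, Or.inl hW⟩ ⟨L, Or.inr hL⟩ :=
        (hadj _ _ hW hL).mpr hle
      have h2 := (hAut _ _).mpr h1
      exact (hadj _ _ (by rw [hrk]; exact hW) (by rw [hrk]; exact hL)).mp h2
    -- fixed-point machinery
    have hjoin : ∀ (P Q L : Submodule F (Fin 3 → F)) (hP : Module.finrank F P = 1)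
        (hQ : Module.finrank F Q = 1) (hL : Module.finrank F L = 2), P ≠ Q →
        P ≤ L → Q ≤ L →
        σ ⟨P, Or.inl hP⟩ = ⟨P, Or.inl hP⟩ → σ ⟨Q, Or.inl hQ⟩ = ⟨Q, Or.inl hQ⟩ →
        σ ⟨L, Or.inr hL⟩ = ⟨L, Or.inr hL⟩ := by
      intro P Q L hP hQ hL hne hPL hQL hfP hfQ
      apply Subtype.ext
      have h1 := himg_le P L hP hL hPL
      have h2 := himg_le Q L hQ hL hQL
      rw [hfP] at h1
      rw [hfQ] at h2
      exact unique_line hne hP hQ (by rw [hrk]; exact hL) hL h1 h2 hPL hQL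
    have hmeet : ∀ (P L L' : Submodule F (Fin 3 → F)) (hP : Module.finrank F P = 1)
        (hL : Module.finrank F L = 2) (hL' : Module.finrank F L' = 2), L ≠ L' →
        P ≤ L → P ≤ L' →
        σ ⟨L, Or.inr hL⟩ = ⟨L, Or.inr hL⟩ → σ ⟨L', Or.inr hL'⟩ = ⟨L', Or.inr hL'⟩ →
        σ ⟨P, Or.inl hP⟩ = ⟨P, Or.inl hP⟩ := by
      intro P L L' hP hL hL' hne hPL hPL' hfL hfL'
      apply Subtype.ext
      have h1 := himg_le P L hP hL hPL
      have h2 := himg_le P L' hP hL' hPL'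
      rw [hfL] at h1
      rw [hfL'] at h2
      exact unique_point hne (by rw [hrk]; exact hP) hP hL hL' h1 h2 hPL hPL'
    -- ## value facts
    have hax2 : α^2 ≠ 0 := pow_ne_zero 2 hα0
    have hinv2 : (α^2)⁻¹ ≠ 0 := inv_ne_zero hax2
    have hPne : ∀ x y : F, x ≠ y → Pp x ≠ Pp y := fun x y h hh => h ((Pp_eq_iff x y).mp hh)
    have hRne : ∀ x y : F, x ≠ y → Rp x ≠ Rp y := fun x y h hh => h ((Rp_eq_iff x y).mp hh)
    have hSne : ∀ x y : F, x ≠ y → Sp x ≠ Sp y := fun x y h hh => h ((Sp_eq_iff x y).mp hh)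
    have h1a : (1 : F) ≠ α := fun h => hα1 h.symm
    have h1a2 : (1 : F) ≠ α^2 := fun h => hα2 h.symm
    have haa2 : α ≠ α^2 := by
      intro h
      have : α * (α - 1) = 0 := by ring_nf; linear_combination -h
      rcases mul_eq_zero.mp this with h' | h'
      · exact hα0 h'
      · exact hα1 (by linear_combination h')
    have h0a2 : (0 : F) ≠ α^2 := fun h => hax2 h.symm
    -- NS membership of the nine
    have hmP0 : Pp (0:F) ∈ NS α := by simp [NS]
    have hmP1 : Pp (1:F) ∈ NS α := by simp [NS]
    have hmPa : Pp α ∈ NS α := by simp [NS]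
    have hmPa2 : Pp (α^2) ∈ NS α := by simp [NS]
    have hmR1 : Rp (1:F) ∈ NS α := by simp [NS]
    have hmRa : Rp α ∈ NS α := by simp [NS]
    have hmS1 : Sp (-1 : F) ∈ NS α := by simp [NS]
    have hmSa : Sp (-α) ∈ NS α := by simp [NS]
    have hmSi : Sp (-(α^2)⁻¹) ∈ NS α := by simp [NS]
    -- injectivity of σ on carriers
    have hinj : ∀ (W W' : Submodule F (Fin 3 → F)) (hW : Module.finrank F W = 1)
        (hW' : Module.finrank F W' = 1),
        (σ ⟨W, Or.inl hW⟩).1 = (σ ⟨W', Or.inl hW'⟩).1 → W = W' := by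
      intro W W' hW hW' h
      have := σ.injective (Subtype.ext h)
      exact congrArg Subtype.val this
    have hinjL : ∀ (W W' : Submodule F (Fin 3 → F)) (hW : Module.finrank F W = 2)
        (hW' : Module.finrank F W' = 2),
        (σ ⟨W, Or.inr hW⟩).1 = (σ ⟨W', Or.inr hW'⟩).1 → W = W' := by
      intro W W' hW hW' h
      have := σ.injective (Subtype.ext h)
      exact congrArg Subtype.val this
    -- ## Step A : the image of line L1 is L1
    have hgL1 : (σ ⟨lineL1, Or.inr lineL1_rank⟩).1 = lineL1 := by
      set LA := (σ ⟨lineL1, Or.inr lineL1_rank⟩).1 with hLA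
      have hLArk : Module.finrank F LA = 2 := by rw [hLA, hrk]; exact lineL1_rank
      have him : ∀ x : F, Pp x ∈ NS α →
          ((σ ⟨Pp x, Or.inl (Pp_rank x)⟩).1 ∈ NS α ∧ (σ ⟨Pp x, Or.inl (Pp_rank x)⟩).1 ≤ LA) := by
        intro x hx
        exact ⟨(hmem _ (Pp_rank x)).mpr hx, himg_le _ _ (Pp_rank x) lineL1_rank (Pp_le_L1 x)⟩
      obtain ⟨hN0, hle0⟩ := him 0 hmP0
      obtain ⟨hN1, hle1⟩ := him 1 hmP1
      obtain ⟨hN2, hle2⟩ := him α hmPa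
      obtain ⟨hN3, hle3⟩ := him (α^2) hmPa2
      have hd01 : (σ ⟨Pp (0:F), Or.inl (Pp_rank 0)⟩).1 ≠ (σ ⟨Pp (1:F), Or.inl (Pp_rank 1)⟩).1 :=
        fun h => hPne 0 1 zero_ne_one (hinj _ _ (Pp_rank 0) (Pp_rank 1) h)
      have hd02 : (σ ⟨Pp (0:F), Or.inl (Pp_rank 0)⟩).1 ≠ (σ ⟨Pp α, Or.inl (Pp_rank α)⟩).1 :=
        fun h => hPne 0 α (Ne.symm hα0) (hinj _ _ (Pp_rank 0) (Pp_rank α) h)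
      have hd03 : (σ ⟨Pp (0:F), Or.inl (Pp_rank 0)⟩).1 ≠ (σ ⟨Pp (α^2), Or.inl (Pp_rank (α^2))⟩).1 :=
        fun h => hPne 0 (α^2) h0a2 (hinj _ _ (Pp_rank 0) (Pp_rank (α^2)) h)
      have hd12 : (σ ⟨Pp (1:F), Or.inl (Pp_rank 1)⟩).1 ≠ (σ ⟨Pp α, Or.inl (Pp_rank α)⟩).1 :=
        fun h => hPne 1 α h1a (hinj _ _ (Pp_rank 1) (Pp_rank α) h)
      have hd13 : (σ ⟨Pp (1:F), Or.inl (Pp_rank 1)⟩).1 ≠ (σ ⟨Pp (α^2), Or.inl (Pp_rank (α^2))⟩).1 :=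
        fun h => hPne 1 (α^2) h1a2 (hinj _ _ (Pp_rank 1) (Pp_rank (α^2)) h)
      have hd23 : (σ ⟨Pp α, Or.inl (Pp_rank α)⟩).1 ≠ (σ ⟨Pp (α^2), Or.inl (Pp_rank (α^2))⟩).1 :=
        fun h => hPne α (α^2) haa2 (hinj _ _ (Pp_rank α) (Pp_rank (α^2)) h)
      rcases three_N_line hα0 hα1 hα2 hα3 hLArk hN0 hN1 hN2 hd01 hd02 hd12 hle0 hle1 hle2 with
        hcase | hcase | hcase | ⟨x, y, hx0, hy0, hcase, _, _, _⟩
      · exfalso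
        rw [hcase] at hle0 hle1 hle2 hle3
        exact four_in_three (NS_on_L0 hα0 hα1 hα2 hα3 hN0 hle0)
          (NS_on_L0 hα0 hα1 hα2 hα3 hN1 hle1) (NS_on_L0 hα0 hα1 hα2 hα3 hN2 hle2)
          (NS_on_L0 hα0 hα1 hα2 hα3 hN3 hle3) hd01 hd02 hd03 hd12 hd13 hd23
      · exact hcase
      · exfalso
        rw [hcase] at hle0 hle1 hle2 hle3
        exact four_in_three (NS_on_L2 hα0 hα1 hα2 hα3 hN0 hle0)
          (NS_on_L2 hα0 hα1 hα2 hα3 hN1 hle1) (NS_on_L2 hα0 hα1 hα2 hα3 hN2 hle2)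
          (NS_on_L2 hα0 hα1 hα2 hα3 hN3 hle3) hd01 hd02 hd03 hd12 hd13 hd23
      · exfalso
        rw [hcase] at hle0 hle1 hle2 hle3
        exact four_in_three (NS_on_T hα0 hα1 hα2 hα3 hx0 hy0 hN0 hle0)
          (NS_on_T hα0 hα1 hα2 hα3 hx0 hy0 hN1 hle1)
          (NS_on_T hα0 hα1 hα2 hα3 hx0 hy0 hN2 hle2)
          (NS_on_T hα0 hα1 hα2 hα3 hx0 hy0 hN3 hle3) hd01 hd02 hd03 hd12 hd13 hd23
    -- ## Step B : the image of line L0 is L0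
    have hv12 : (-1 : F) ≠ -α := fun h => hα1 (by linear_combination h)
    have hv13 : (-1 : F) ≠ -(α^2)⁻¹ := by
      intro h
      have h1 : (α^2)⁻¹ = 1 := by linear_combination h
      exact hα2 (inv_eq_one.mp h1)
    have hv23 : (-α : F) ≠ -(α^2)⁻¹ := by
      intro h
      have h1 : α = (α^2)⁻¹ := by linear_combination -h
      have h2 : α * α^2 = 1 := by
        calc α * α^2 = (α^2)⁻¹ * α^2 := by rw [← h1]
        _ = 1 := inv_mul_cancel₀ hax2
      exact hα3 (by linear_combination h2)
    have hgL0 : (σ ⟨lineL0, Or.inr lineL0_rank⟩).1 = lineL0 := by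
      set LB := (σ ⟨lineL0, Or.inr lineL0_rank⟩).1 with hLB
      have hLBrk : Module.finrank F LB = 2 := by rw [hLB, hrk]; exact lineL0_rank
      have him : ∀ m : F, Sp m ∈ NS α →
          ((σ ⟨Sp m, Or.inl (Sp_rank m)⟩).1 ∈ NS α ∧ (σ ⟨Sp m, Or.inl (Sp_rank m)⟩).1 ≤ LB) := by
        intro m hm
        exact ⟨(hmem _ (Sp_rank m)).mpr hm, himg_le _ _ (Sp_rank m) lineL0_rank (Sp_le_L0 m)⟩
      obtain ⟨hN1, hle1⟩ := him (-1) hmS1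
      obtain ⟨hN2, hle2⟩ := him (-α) hmSa
      obtain ⟨hN3, hle3⟩ := him (-(α^2)⁻¹) hmSi
      have hd12 : (σ ⟨Sp (-1:F), Or.inl (Sp_rank (-1))⟩).1 ≠
          (σ ⟨Sp (-α), Or.inl (Sp_rank (-α))⟩).1 :=
        fun h => hSne _ _ hv12 (hinj _ _ (Sp_rank (-1)) (Sp_rank (-α)) h)
      have hd13 : (σ ⟨Sp (-1:F), Or.inl (Sp_rank (-1))⟩).1 ≠
          (σ ⟨Sp (-(α^2)⁻¹), Or.inl (Sp_rank (-(α^2)⁻¹))⟩).1 :=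
        fun h => hSne _ _ hv13 (hinj _ _ (Sp_rank (-1)) (Sp_rank (-(α^2)⁻¹)) h)
      have hd23 : (σ ⟨Sp (-α), Or.inl (Sp_rank (-α))⟩).1 ≠
          (σ ⟨Sp (-(α^2)⁻¹), Or.inl (Sp_rank (-(α^2)⁻¹))⟩).1 :=
        fun h => hSne _ _ hv23 (hinj _ _ (Sp_rank (-α)) (Sp_rank (-(α^2)⁻¹)) h)
      -- the image of the point E0 = Sp 0
      have he0N : (σ ⟨Sp (0:F), Or.inl (Sp_rank 0)⟩).1 ∉ NS α :=
        fun h => Sp0_not_NS hα0 hα1 hα2 hα3 ((hmem _ (Sp_rank 0)).mp h)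
      have he0rk : Module.finrank F ((σ ⟨Sp (0:F), Or.inl (Sp_rank 0)⟩).1 :
          Submodule F (Fin 3 → F)) = 1 := by rw [hrk]; exact Sp_rank 0
      have he0le0 : (σ ⟨Sp (0:F), Or.inl (Sp_rank 0)⟩).1 ≤ LB :=
        himg_le _ _ (Sp_rank 0) lineL0_rank (Sp_le_L0 0)
      have he0le1 : (σ ⟨Sp (0:F), Or.inl (Sp_rank 0)⟩).1 ≤ lineL1 := by
        have := himg_le _ _ (Sp_rank 0) lineL1_rank ((Sp_le_L1_iff 0).mpr rfl)
        rw [hgL1] at this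
        exact this
      rcases three_N_line hα0 hα1 hα2 hα3 hLBrk hN1 hN2 hN3 hd12 hd13 hd23 hle1 hle2 hle3 with
        hcase | hcase | hcase | ⟨x, y, hx0, hy0, hcase, hPxN, _, _⟩
      · exact hcase
      · exfalso
        exact L0_ne_L1 (hinjL _ _ lineL0_rank lineL1_rank (hcase.trans hgL1.symm))
      · exfalso
        have heq : (σ ⟨Sp (0:F), Or.inl (Sp_rank 0)⟩).1 = Pp 0 :=
          unique_point (Ne.symm L1_ne_L2) he0rk (Pp_rank 0) lineL2_rank lineL1_rank
            (hcase ▸ he0le0) he0le1 ((Pp_le_L2_iff 0).mpr rfl) (Pp_le_L1 0)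
        exact he0N (heq ▸ hmP0)
      · exfalso
        have heq : (σ ⟨Sp (0:F), Or.inl (Sp_rank 0)⟩).1 = Pp x :=
          unique_point (T_ne_L1 hx0 hy0) he0rk (Pp_rank x) (lineT_rank hx0) lineL1_rank
            (hcase ▸ he0le0) he0le1 (Pp_le_T x y) (Pp_le_L1 x)
        exact he0N (heq ▸ hPxN)
    -- ## Step C : the image of line L2 is L2
    have hgL2 : (σ ⟨lineL2, Or.inr lineL2_rank⟩).1 = lineL2 := by
      set LC := (σ ⟨lineL2, Or.inr lineL2_rank⟩).1 with hLC
      have hLCrk : Module.finrank F LC = 2 := by rw [hLC, hrk]; exact lineL2_rank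
      have hN1 : (σ ⟨Pp (0:F), Or.inl (Pp_rank 0)⟩).1 ∈ NS α := (hmem _ (Pp_rank 0)).mpr hmP0
      have hle1 : (σ ⟨Pp (0:F), Or.inl (Pp_rank 0)⟩).1 ≤ LC :=
        himg_le _ _ (Pp_rank 0) lineL2_rank ((Pp_le_L2_iff 0).mpr rfl)
      have hN2 : (σ ⟨Rp (1:F), Or.inl (Rp_rank 1)⟩).1 ∈ NS α := (hmem _ (Rp_rank 1)).mpr hmR1
      have hle2 : (σ ⟨Rp (1:F), Or.inl (Rp_rank 1)⟩).1 ≤ LC :=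
        himg_le _ _ (Rp_rank 1) lineL2_rank (Rp_le_L2 1)
      have hN3 : (σ ⟨Rp α, Or.inl (Rp_rank α)⟩).1 ∈ NS α := (hmem _ (Rp_rank α)).mpr hmRa
      have hle3 : (σ ⟨Rp α, Or.inl (Rp_rank α)⟩).1 ≤ LC :=
        himg_le _ _ (Rp_rank α) lineL2_rank (Rp_le_L2 α)
      have hne1 : Pp (0:F) ≠ Rp 1 := fun h => one_ne_zero ((Pp_eq_Rp_iff 0 1).mp h).2
      have hne2 : Pp (0:F) ≠ Rp α := fun h => hα0 ((Pp_eq_Rp_iff 0 α).mp h).2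
      have hd12 : (σ ⟨Pp (0:F), Or.inl (Pp_rank 0)⟩).1 ≠ (σ ⟨Rp (1:F), Or.inl (Rp_rank 1)⟩).1 :=
        fun h => hne1 (hinj _ _ (Pp_rank 0) (Rp_rank 1) h)
      have hd13 : (σ ⟨Pp (0:F), Or.inl (Pp_rank 0)⟩).1 ≠ (σ ⟨Rp α, Or.inl (Rp_rank α)⟩).1 :=
        fun h => hne2 (hinj _ _ (Pp_rank 0) (Rp_rank α) h)
      have hd23 : (σ ⟨Rp (1:F), Or.inl (Rp_rank 1)⟩).1 ≠ (σ ⟨Rp α, Or.inl (Rp_rank α)⟩).1 :=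
        fun h => hRne 1 α h1a (hinj _ _ (Rp_rank 1) (Rp_rank α) h)
      -- the image of the point E1
      have he1N : (σ ⟨E1p, Or.inl E1p_rank⟩).1 ∉ NS α :=
        fun h => E1p_not_NS hα0 hα1 hα2 hα3 ((hmem _ E1p_rank).mp h)
      have he1rk : Module.finrank F ((σ ⟨E1p, Or.inl E1p_rank⟩).1 :
          Submodule F (Fin 3 → F)) = 1 := by rw [hrk]; exact E1p_rank
      have he1le2 : (σ ⟨E1p, Or.inl E1p_rank⟩).1 ≤ LC :=
        himg_le _ _ E1p_rank lineL2_rank E1p_le_L2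
      have he1le0 : (σ ⟨E1p, Or.inl E1p_rank⟩).1 ≤ lineL0 := by
        have := himg_le _ _ E1p_rank lineL0_rank E1p_le_L0
        rw [hgL0] at this
        exact this
      rcases three_N_line hα0 hα1 hα2 hα3 hLCrk hN1 hN2 hN3 hd12 hd13 hd23 hle1 hle2 hle3 with
        hcase | hcase | hcase | ⟨x, y, hx0, hy0, hcase, _, _, hSyxN⟩
      · exfalso
        exact (Ne.symm L0_ne_L2) (hinjL _ _ lineL2_rank lineL0_rank (hcase.trans hgL0.symm))
      · exfalso
        exact (Ne.symm L1_ne_L2) (hinjL _ _ lineL2_rank lineL1_rank (hcase.trans hgL1.symm))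
      · exact hcase
      · exfalso
        have hSle : Sp (-(y/x)) ≤ lineT x y := by
          apply Sp_le_T hx0
          field_simp
          ring
        have heq : (σ ⟨E1p, Or.inl E1p_rank⟩).1 = Sp (-(y/x)) :=
          unique_point (T_ne_L0 hy0) he1rk (Sp_rank _) (lineT_rank hx0) lineL0_rank
            (hcase ▸ he1le2) he1le0 hSle (Sp_le_L0 _)
        exact he1N (heq ▸ hSyxN)
    -- fixed line vertices
    have hfL0 : σ ⟨lineL0, Or.inr lineL0_rank⟩ = ⟨lineL0, Or.inr lineL0_rank⟩ := Subtype.ext hgL0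
    have hfL1 : σ ⟨lineL1, Or.inr lineL1_rank⟩ = ⟨lineL1, Or.inr lineL1_rank⟩ := Subtype.ext hgL1
    have hfL2 : σ ⟨lineL2, Or.inr lineL2_rank⟩ = ⟨lineL2, Or.inr lineL2_rank⟩ := Subtype.ext hgL2
    -- fixed corner points
    have hfE2 : σ ⟨Pp (0:F), Or.inl (Pp_rank 0)⟩ = ⟨Pp (0:F), Or.inl (Pp_rank 0)⟩ :=
      hmeet _ _ _ (Pp_rank 0) lineL1_rank lineL2_rank L1_ne_L2 (Pp_le_L1 0)
        ((Pp_le_L2_iff 0).mpr rfl) hfL1 hfL2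
    have hfE0 : σ ⟨Sp (0:F), Or.inl (Sp_rank 0)⟩ = ⟨Sp (0:F), Or.inl (Sp_rank 0)⟩ :=
      hmeet _ _ _ (Sp_rank 0) lineL0_rank lineL1_rank L0_ne_L1 (Sp_le_L0 0)
        ((Sp_le_L1_iff 0).mpr rfl) hfL0 hfL1
    have hfE1 : σ ⟨E1p, Or.inl E1p_rank⟩ = ⟨E1p, Or.inl E1p_rank⟩ :=
      hmeet _ _ _ E1p_rank lineL0_rank lineL2_rank L0_ne_L2 E1p_le_L0 E1p_le_L2 hfL0 hfL2
    -- ## images of the N points are constrained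
    have hPimg : ∀ x : F, (x = 1 ∨ x = α ∨ x = α^2) →
        ∃ x', (x' = 1 ∨ x' = α ∨ x' = α^2) ∧
          (σ ⟨Pp x, Or.inl (Pp_rank x)⟩).1 = Pp x' := by
      intro x hx
      have hxN : Pp x ∈ NS α := by rcases hx with rfl|rfl|rfl <;> assumption
      have hN : (σ ⟨Pp x, Or.inl (Pp_rank x)⟩).1 ∈ NS α := (hmem _ (Pp_rank x)).mpr hxN
      have hle : (σ ⟨Pp x, Or.inl (Pp_rank x)⟩).1 ≤ lineL1 := by
        have := himg_le _ _ (Pp_rank x) lineL1_rank (Pp_le_L1 x)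
        rw [hgL1] at this; exact this
      rcases NS_on_L1 hα0 hα1 hα2 hα3 hN hle with h0|h1|h1|h1
      · exfalso
        have heq := hinj _ _ (Pp_rank x) (Pp_rank 0)
          (h0.trans (congrArg Subtype.val hfE2).symm)
        have hx0' : x = 0 := (Pp_eq_iff x 0).mp heq
        rcases hx with rfl|rfl|rfl
        · exact one_ne_zero hx0'
        · exact hα0 hx0'
        · exact hax2 hx0'
      · exact ⟨1, Or.inl rfl, h1⟩
      · exact ⟨α, Or.inr (Or.inl rfl), h1⟩
      · exact ⟨α^2, Or.inr (Or.inr rfl), h1⟩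
    have hRimg : ∀ y : F, (y = 1 ∨ y = α) →
        ∃ y', (y' = 1 ∨ y' = α) ∧
          (σ ⟨Rp y, Or.inl (Rp_rank y)⟩).1 = Rp y' := by
      intro y hy
      have hyN : Rp y ∈ NS α := by rcases hy with rfl|rfl <;> assumption
      have hN : (σ ⟨Rp y, Or.inl (Rp_rank y)⟩).1 ∈ NS α := (hmem _ (Rp_rank y)).mpr hyN
      have hle : (σ ⟨Rp y, Or.inl (Rp_rank y)⟩).1 ≤ lineL2 := by
        have := himg_le _ _ (Rp_rank y) lineL2_rank (Rp_le_L2 y)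
        rw [hgL2] at this; exact this
      rcases NS_on_L2 hα0 hα1 hα2 hα3 hN hle with h0|h1|h1
      · exfalso
        have heq := hinj _ _ (Rp_rank y) (Pp_rank 0)
          (h0.trans (congrArg Subtype.val hfE2).symm)
        have hy0' : y = 0 := ((Pp_eq_Rp_iff 0 y).mp heq.symm).2
        rcases hy with rfl|rfl
        · exact one_ne_zero hy0'
        · exact hα0 hy0'
      · exact ⟨1, Or.inl rfl, h1⟩
      · exact ⟨α, Or.inr rfl, h1⟩
    have hSpNS : ∀ m : F, Sp m ∈ NS α → (m = -1 ∨ m = -α ∨ m = -(α^2)⁻¹) := by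
      intro m hm
      rcases NS_elim hm with h|h|h|h|h|h|h|h|h
      · exact absurd h.symm (Pp_ne_Sp 0 m)
      · exact absurd h.symm (Pp_ne_Sp 1 m)
      · exact absurd h.symm (Pp_ne_Sp α m)
      · exact absurd h.symm (Pp_ne_Sp (α^2) m)
      · exact absurd h.symm (Rp_ne_Sp 1 m)
      · exact absurd h.symm (Rp_ne_Sp α m)
      · exact Or.inl ((Sp_eq_iff _ _).mp h)
      · exact Or.inr (Or.inl ((Sp_eq_iff _ _).mp h))
      · exact Or.inr (Or.inr ((Sp_eq_iff _ _).mp h))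
    have hSnotNS : Sp (-α⁻¹) ∉ NS α := by
      intro h
      rcases hSpNS _ h with h'|h'|h'
      · have : α⁻¹ = 1 := by linear_combination -h'
        exact hα1 (inv_eq_one.mp this)
      · have h1 : α⁻¹ = α := by linear_combination -h'
        have h2 : α * α = 1 := by
          calc α * α = α * α⁻¹ := by rw [h1]
          _ = 1 := mul_inv_cancel₀ hα0
        exact hα2 (by linear_combination h2)
      · have h1 : α⁻¹ = (α^2)⁻¹ := by linear_combination -h'
        have h2 : α = α^2 := by
          have := congrArg (fun t => t⁻¹) h1
          simpa using this
        exact haa2 h2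
    -- ## the transfer lemma along T-lines
    have htrans : ∀ (x y x' y' m m' : F) (hx : x ≠ 0) (hx' : x' ≠ 0) (hy' : y' ≠ 0),
        m * x + y = 0 → m' * x' + y' = 0 →
        (σ ⟨Pp x, Or.inl (Pp_rank x)⟩).1 = Pp x' →
        (σ ⟨Rp y, Or.inl (Rp_rank y)⟩).1 = Rp y' →
        (σ ⟨Sp m, Or.inl (Sp_rank m)⟩).1 = Sp m' := by
      intro x y x' y' m m' hx hx' hy' hm hm' hP hR
      have hTrk : Module.finrank F (lineT x y : Submodule F (Fin 3 → F)) = 2 := lineT_rank hx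
      have hSleT : Sp m ≤ lineT x y := Sp_le_T hx hm
      have himgT : (σ ⟨lineT x y, Or.inr hTrk⟩).1 = lineT x' y' := by
        have h1 := himg_le _ _ (Pp_rank x) hTrk (Pp_le_T x y)
        have h2 := himg_le _ _ (Rp_rank y) hTrk (Rp_le_T x y)
        rw [hP] at h1
        rw [hR] at h2
        have hne : Pp x' ≠ Rp y' := fun h => hx' ((Pp_eq_Rp_iff _ _).mp h).1
        exact unique_line hne (Pp_rank x') (Rp_rank y') (by rw [hrk]; exact hTrk)
          (lineT_rank hx') h1 h2 (Pp_le_T x' y') (Rp_le_T x' y')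
      have h3 := himg_le _ _ (Sp_rank m) hTrk hSleT
      rw [himgT] at h3
      have h4 : (σ ⟨Sp m, Or.inl (Sp_rank m)⟩).1 ≤ lineL0 := by
        have := himg_le _ _ (Sp_rank m) lineL0_rank (Sp_le_L0 m)
        rw [hgL0] at this; exact this
      exact unique_point (T_ne_L0 hy') (by rw [hrk]; exact Sp_rank m) (Sp_rank m')
        (lineT_rank hx') lineL0_rank h3 h4 (Sp_le_T hx' hm') (Sp_le_L0 m')
    -- ## rigidity: the images must be the identity
    obtain ⟨a, ha, hPa⟩ := hPimg 1 (Or.inl rfl)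
    obtain ⟨b, hb, hPb⟩ := hPimg α (Or.inr (Or.inl rfl))
    obtain ⟨cc, hcv, hPc⟩ := hPimg (α^2) (Or.inr (Or.inr rfl))
    obtain ⟨d, hd, hRd⟩ := hRimg 1 (Or.inl rfl)
    obtain ⟨e, he, hRe⟩ := hRimg α (Or.inr rfl)
    have ha0 : a ≠ 0 := by rcases ha with rfl|rfl|rfl <;> first | exact one_ne_zero | exact hα0 | exact hax2
    have hb0 : b ≠ 0 := by rcases hb with rfl|rfl|rfl <;> first | exact one_ne_zero | exact hα0 | exact hax2
    have hc0 : cc ≠ 0 := by rcases hcv with rfl|rfl|rfl <;> first | exact one_ne_zero | exact hα0 | exact hax2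
    have hd0 : d ≠ 0 := by rcases hd with rfl|rfl <;> first | exact one_ne_zero | exact hα0
    have he0 : e ≠ 0 := by rcases he with rfl|rfl <;> first | exact one_ne_zero | exact hα0
    have hab : a ≠ b := by
      intro h
      have := hinj _ _ (Pp_rank 1) (Pp_rank α) (hPa.trans (h ▸ hPb.symm))
      exact h1a ((Pp_eq_iff 1 α).mp this)
    have hac : a ≠ cc := by
      intro h
      have := hinj _ _ (Pp_rank 1) (Pp_rank (α^2)) (hPa.trans (h ▸ hPc.symm))
      exact h1a2 ((Pp_eq_iff 1 (α^2)).mp this)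
    have hbc : b ≠ cc := by
      intro h
      have := hinj _ _ (Pp_rank α) (Pp_rank (α^2)) (hPb.trans (h ▸ hPc.symm))
      exact haa2 ((Pp_eq_iff α (α^2)).mp this)
    have hde : d ≠ e := by
      intro h
      have := hinj _ _ (Rp_rank 1) (Rp_rank α) (hRd.trans (h ▸ hRe.symm))
      exact h1a ((Rp_eq_iff 1 α).mp this)
    have eq1 : (σ ⟨Sp (-1 : F), Or.inl (Sp_rank (-1))⟩).1 = Sp (-(d/a)) :=
      htrans 1 1 a d (-1) (-(d/a)) one_ne_zero ha0 hd0 (by ring) (by field_simp; ring) hPa hRd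
    have eq1' : (σ ⟨Sp (-1 : F), Or.inl (Sp_rank (-1))⟩).1 = Sp (-(e/b)) :=
      htrans α α b e (-1) (-(e/b)) hα0 hb0 he0 (by ring) (by field_simp; ring) hPb hRe
    have eq2 : (σ ⟨Sp (-α), Or.inl (Sp_rank (-α))⟩).1 = Sp (-(e/a)) :=
      htrans 1 α a e (-α) (-(e/a)) one_ne_zero ha0 he0 (by ring) (by field_simp; ring) hPa hRe
    have eq3 : (σ ⟨Sp (-(α^2)⁻¹), Or.inl (Sp_rank (-(α^2)⁻¹))⟩).1 = Sp (-(d/cc)) :=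
      htrans (α^2) 1 cc d (-(α^2)⁻¹) (-(d/cc)) hax2 hc0 hd0 (by field_simp; ring) (by field_simp; ring)
        hPc hRd
    have eq4 : (σ ⟨Sp (-α⁻¹), Or.inl (Sp_rank (-α⁻¹))⟩).1 = Sp (-(d/b)) :=
      htrans α 1 b d (-α⁻¹) (-(d/b)) hα0 hb0 hd0 (by field_simp; ring) (by field_simp; ring) hPb hRd
    have c1 : d * b = e * a := by
      have h := (Sp_eq_iff _ _).mp (eq1.symm.trans eq1')
      field_simp at h
      linear_combination -h
    have c0 : Sp (-(d/a)) ∈ NS α := eq1 ▸ ((hmem _ (Sp_rank (-1))).mpr hmS1)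
    have c2 : Sp (-(e/a)) ∈ NS α := eq2 ▸ ((hmem _ (Sp_rank (-α))).mpr hmSa)
    have c4 : Sp (-(d/b)) ∉ NS α := by
      rw [← eq4]
      intro h
      exact hSnotNS ((hmem _ (Sp_rank (-α⁻¹))).mp h)
    have hval : a = 1 ∧ b = α ∧ cc = α^2 ∧ d = 1 ∧ e = α := by
      rcases hd with rfl|rfl
      · rcases he with rfl|rfl
        · exact absurd rfl hde
        · rcases ha with rfl|rfl|rfl
          · have hbval : b = α := by linear_combination c1
            have hccval : cc = α^2 := by
              rcases hcv with rfl|rfl|rfl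
              · exact absurd rfl hac
              · exact absurd hbval hbc
              · rfl
            exact ⟨rfl, hbval, hccval, rfl, rfl⟩
          · have hbval : b = α^2 := by linear_combination c1
            exfalso
            apply c4
            have hrw : -((1:F)/b) = -(α^2)⁻¹ := by rw [hbval, one_div]
            rw [hrw]
            exact hmSi
          · have hbval : b = α^3 := by linear_combination c1
            exfalso
            rcases hb with rfl|rfl|rfl
            · exact hα3 hbval.symm
            · have h2 : α * (α^2 - 1) = 0 := by linear_combination -hbval
              rcases mul_eq_zero.mp h2 with h'|h'
              · exact hα0 h'
              · exact hα2 (by linear_combination h')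
            · have h2 : α^2 * (α - 1) = 0 := by linear_combination -hbval
              rcases mul_eq_zero.mp h2 with h'|h'
              · exact hax2 h'
              · exact hα1 (by linear_combination h')
      · rcases he with rfl|rfl
        · rcases ha with rfl|rfl|rfl
          · exfalso
            rcases hb with rfl|rfl|rfl
            · exact hα1 (by linear_combination c1)
            · exact hα2 (by linear_combination c1)
            · exact hα3 (by linear_combination c1)
          · exfalso
            apply hSnotNS
            have hrw : (-α⁻¹ : F) = -((1:F)/α) := by rw [one_div]
            rw [hrw]
            exact c2
          · exfalso
            apply hSnotNS
            have hrw : (-α⁻¹ : F) = -(α/α^2) := by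
              rw [pow_two]
              rw [div_mul_cancel_left₀ hα0]
            rw [hrw]
            exact c0
        · exact absurd rfl hde
    obtain ⟨ha1, hbα, hcα2, hd1, heα⟩ := hval
    subst ha1 hbα hcα2 hd1 heα
    -- the nine point fixes
    have hfP1 : σ ⟨Pp (1:F), Or.inl (Pp_rank 1)⟩ = ⟨Pp (1:F), Or.inl (Pp_rank 1)⟩ :=
      Subtype.ext hPa
    have hfPa : σ ⟨Pp α, Or.inl (Pp_rank α)⟩ = ⟨Pp α, Or.inl (Pp_rank α)⟩ :=
      Subtype.ext hPb
    have hfPa2 : σ ⟨Pp (α^2), Or.inl (Pp_rank (α^2))⟩ = ⟨Pp (α^2), Or.inl (Pp_rank (α^2))⟩ :=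
      Subtype.ext hPc
    have hfR1 : σ ⟨Rp (1:F), Or.inl (Rp_rank 1)⟩ = ⟨Rp (1:F), Or.inl (Rp_rank 1)⟩ :=
      Subtype.ext hRd
    have hfRa : σ ⟨Rp α, Or.inl (Rp_rank α)⟩ = ⟨Rp α, Or.inl (Rp_rank α)⟩ :=
      Subtype.ext hRe
    have hfS1 : σ ⟨Sp (-1:F), Or.inl (Sp_rank (-1))⟩ = ⟨Sp (-1:F), Or.inl (Sp_rank (-1))⟩ := by
      apply Subtype.ext
      rw [eq1]
      norm_num
    have hfSa : σ ⟨Sp (-α), Or.inl (Sp_rank (-α))⟩ = ⟨Sp (-α), Or.inl (Sp_rank (-α))⟩ := by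
      apply Subtype.ext
      rw [eq2]
      rw [div_one]
    have hfSi : σ ⟨Sp (-(α^2)⁻¹), Or.inl (Sp_rank (-(α^2)⁻¹))⟩ =
        ⟨Sp (-(α^2)⁻¹), Or.inl (Sp_rank (-(α^2)⁻¹))⟩ := by
      apply Subtype.ext
      rw [eq3]
      rw [one_div]
    -- ## closure: every point is fixed
    -- line fixes we use repeatedly
    have hfLV : ∀ t : F, (σ ⟨Pp t, Or.inl (Pp_rank t)⟩ = ⟨Pp t, Or.inl (Pp_rank t)⟩) →
        σ ⟨lineV t, Or.inr (lineV_rank t)⟩ = ⟨lineV t, Or.inr (lineV_rank t)⟩ := by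
      intro t ht
      exact hjoin (Pp t) E1p (lineV t) (Pp_rank t) E1p_rank (lineV_rank t)
        (Ne.symm (E1p_ne_Pp t)) (Pp_le_V t) (E1p_le_V t) ht hfE1
    have hfLU1 : σ ⟨lineU1, Or.inr lineU1_rank⟩ = ⟨lineU1, Or.inr lineU1_rank⟩ :=
      hjoin (Rp 1) (Sp 0) lineU1 (Rp_rank 1) (Sp_rank 0) lineU1_rank
        (Rp_ne_Sp 1 0) Rp_one_le_U1 E0_le_U1 hfR1 hfE0
    have hfU : σ ⟨pt ![(1:F),1,1], Or.inl (aff_rank 1 1)⟩ =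
        ⟨pt ![(1:F),1,1], Or.inl (aff_rank 1 1)⟩ := by
      apply hmeet _ (lineV 1) lineU1 (aff_rank 1 1) (lineV_rank 1) lineU1_rank
        (fun h => not_E1p_le_U1 (h ▸ E1p_le_V 1)) (aff_le_V 1 1) U_le_U1
        (hfLV 1 hfP1) hfLU1
    have hfLD : σ ⟨lineD, Or.inr lineD_rank⟩ = ⟨lineD, Or.inr lineD_rank⟩ :=
      hjoin (Pp 0) (pt ![(1:F),1,1]) lineD (Pp_rank 0) (aff_rank 1 1) lineD_rank
        (Pp_ne_U 0) Pp0_le_D U_le_D hfE2 hfU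
    have hfD : σ ⟨Sp (1:F), Or.inl (Sp_rank 1)⟩ = ⟨Sp (1:F), Or.inl (Sp_rank 1)⟩ :=
      hmeet _ lineD lineL0 (Sp_rank 1) lineD_rank lineL0_rank
        (fun h => not_Pp0_le_L0 (h ▸ Pp0_le_D)) Sp1_le_D (Sp_le_L0 1) hfLD hfL0
    -- multiplicativity
    have hfmul : ∀ t s : F, t ≠ 0 →
        (σ ⟨Pp t, Or.inl (Pp_rank t)⟩ = ⟨Pp t, Or.inl (Pp_rank t)⟩) →
        (σ ⟨Pp s, Or.inl (Pp_rank s)⟩ = ⟨Pp s, Or.inl (Pp_rank s)⟩) →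
        σ ⟨Pp (t*s), Or.inl (Pp_rank (t*s))⟩ = ⟨Pp (t*s), Or.inl (Pp_rank (t*s))⟩ := by
      intro t s ht hft hfs
      have hfDt : σ ⟨pt ![t,t,1], Or.inl (aff_rank t t)⟩ =
          ⟨pt ![t,t,1], Or.inl (aff_rank t t)⟩ :=
        hmeet _ (lineV t) lineD (aff_rank t t) (lineV_rank t) lineD_rank
          (fun h => not_E1p_le_D (h ▸ E1p_le_V t)) (aff_le_V t t) (Dt_le_D t)
          (hfLV t hft) hfLD
      have hfds : σ ⟨pt ![s-1,-1,0], Or.inl (ds_rank s)⟩ =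
          ⟨pt ![s-1,-1,0], Or.inl (ds_rank s)⟩ := by
        apply hmeet _ (lineJ s) lineL0 (ds_rank s) (lineJ_rank s) lineL0_rank
          (fun h => not_z1_le_L0 1 1 (h ▸ U_le_J s)) (ds_le_J s) (ds_le_L0 s)
          (hjoin (Pp s) (pt ![(1:F),1,1]) (lineJ s) (Pp_rank s) (aff_rank 1 1) (lineJ_rank s)
            (Pp_ne_U s) (Pp_le_J s) (U_le_J s) hfs hfU) hfL0
      have hfLW : σ ⟨lineW t s, Or.inr (lineW_rank t s)⟩ =
          ⟨lineW t s, Or.inr (lineW_rank t s)⟩ :=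
        hjoin (pt ![t,t,1]) (pt ![s-1,-1,0]) (lineW t s) (aff_rank t t) (ds_rank s)
          (lineW_rank t s) (Dt_ne_ds t s s) (Dt_le_W t s) (ds_le_W t s) hfDt hfds
      exact hmeet _ (lineW t s) lineL1 (Pp_rank (t*s)) (lineW_rank t s) lineL1_rank
        (fun h => ht ((aff_le_L1_iff t t).mp (h ▸ Dt_le_W t s))) (Pts_le_W t s)
        (Pp_le_L1 (t*s)) hfLW hfL1
    have hfpow : ∀ k : ℕ, σ ⟨Pp (α ^ k), Or.inl (Pp_rank (α ^ k))⟩ =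
        ⟨Pp (α ^ k), Or.inl (Pp_rank (α ^ k))⟩ := by
      intro k
      induction k with
      | zero => simpa using hfP1
      | succ n ih =>
        have := hfmul (α ^ n) α (pow_ne_zero n hα0) ih hfPa
        simpa [pow_succ] using this
    have hfixP : ∀ t : F, σ ⟨Pp t, Or.inl (Pp_rank t)⟩ = ⟨Pp t, Or.inl (Pp_rank t)⟩ := by
      intro t
      by_cases h : t = 0
      · subst h; exact hfE2
      · obtain ⟨k, hk⟩ := hgen t h
        have := hfpow k
        rw [hk] at this
        exact this
    have hfaff : ∀ x y : F, σ ⟨pt ![x,y,1], Or.inl (aff_rank x y)⟩ =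
        ⟨pt ![x,y,1], Or.inl (aff_rank x y)⟩ := by
      intro x y
      have hfLG : σ ⟨lineG x y, Or.inr (lineG_rank x y)⟩ =
          ⟨lineG x y, Or.inr (lineG_rank x y)⟩ :=
        hjoin (Pp (x-y)) (Sp 1) (lineG x y) (Pp_rank (x-y)) (Sp_rank 1) (lineG_rank x y)
          (Pp_ne_Sp (x-y) 1) (Pp_le_G x y) (Sp1_le_G x y) (hfixP (x-y)) hfD
      exact hmeet _ (lineV x) (lineG x y) (aff_rank x y) (lineV_rank x) (lineG_rank x y)
        (fun h => not_E1p_le_G x y (h ▸ E1p_le_V x)) (aff_le_V x y) (aff_le_G x y)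
        (hfLV x (hfixP x)) hfLG
    have hfS : ∀ m : F, σ ⟨Sp m, Or.inl (Sp_rank m)⟩ = ⟨Sp m, Or.inl (Sp_rank m)⟩ := by
      intro m
      have hfLE : σ ⟨lineE m, Or.inr (lineE_rank m)⟩ = ⟨lineE m, Or.inr (lineE_rank m)⟩ :=
        hjoin (Pp 0) (pt ![(1:F),m,1]) (lineE m) (Pp_rank 0) (aff_rank 1 m) (lineE_rank m)
          (Pp0_ne_aff1m m) (Pp0_le_E m) (aff1m_le_E m) hfE2 (hfaff 1 m)
      exact hmeet _ (lineE m) lineL0 (Sp_rank m) (lineE_rank m) lineL0_rank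
        (fun h => not_Pp0_le_L0 (h ▸ Pp0_le_E m)) (Sp_le_E m) (Sp_le_L0 m) hfLE hfL0
    -- every rank-1 vertex is fixed
    have hfixpt : ∀ (W : Submodule F (Fin 3 → F)) (h : Module.finrank F W = 1),
        σ ⟨W, Or.inl h⟩ = ⟨W, Or.inl h⟩ := by
      intro W h
      obtain ⟨u, hu, hWu⟩ := rank1_span h
      have hu3 : u = ![u 0, u 1, u 2] := by
        funext i
        fin_cases i <;> rfl
      by_cases h2 : u 2 = 0
      · by_cases h0 : u 0 = 0
        · -- E1 direction
          have h1 : u 1 ≠ 0 := by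
            intro h1
            apply hu
            rw [hu3, h0, h1, h2, zero3]
          have hvec : (u 1)⁻¹ • u = ![(0:F), 1, 0] := by
            calc (u 1)⁻¹ • u = (u 1)⁻¹ • ![u 0, u 1, u 2] := by rw [← hu3]
            _ = ![(u 1)⁻¹ * u 0, (u 1)⁻¹ * u 1, (u 1)⁻¹ * u 2] := smul3 _ _ _ _
            _ = ![(0:F), 1, 0] := by
                rw [h0, h2, inv_mul_cancel₀ h1, mul_zero]
          have hW' : W = E1p := by
            rw [hWu, ← pt_def, ← pt_smul_eq ((u 1)⁻¹) (inv_ne_zero h1), hvec, E1p_def]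
          have hveq : (⟨W, Or.inl h⟩ : {W : Submodule F (Fin 3 → F) //
              Module.finrank F W = 1 ∨ Module.finrank F W = 2}) =
              ⟨E1p, Or.inl E1p_rank⟩ := Subtype.ext hW'
          rw [hveq]
          exact hfE1
        · -- an S point
          have hvec : (u 0)⁻¹ • u = ![(1:F), (u 0)⁻¹ * u 1, 0] := by
            calc (u 0)⁻¹ • u = (u 0)⁻¹ • ![u 0, u 1, u 2] := by rw [← hu3]
            _ = ![(u 0)⁻¹ * u 0, (u 0)⁻¹ * u 1, (u 0)⁻¹ * u 2] := smul3 _ _ _ _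
            _ = ![(1:F), (u 0)⁻¹ * u 1, 0] := by
                rw [h2, inv_mul_cancel₀ h0, mul_zero]
          have hW' : W = Sp ((u 0)⁻¹ * u 1) := by
            rw [hWu, ← pt_def, ← pt_smul_eq ((u 0)⁻¹) (inv_ne_zero h0), hvec, Sp_def]
          have hveq : (⟨W, Or.inl h⟩ : {W : Submodule F (Fin 3 → F) //
              Module.finrank F W = 1 ∨ Module.finrank F W = 2}) =
              ⟨Sp ((u 0)⁻¹ * u 1), Or.inl (Sp_rank _)⟩ := Subtype.ext hW'
          rw [hveq]
          exact hfS _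
      · -- an affine point
        have hvec : (u 2)⁻¹ • u = ![(u 2)⁻¹ * u 0, (u 2)⁻¹ * u 1, 1] := by
          calc (u 2)⁻¹ • u = (u 2)⁻¹ • ![u 0, u 1, u 2] := by rw [← hu3]
          _ = ![(u 2)⁻¹ * u 0, (u 2)⁻¹ * u 1, (u 2)⁻¹ * u 2] := smul3 _ _ _ _
          _ = ![(u 2)⁻¹ * u 0, (u 2)⁻¹ * u 1, 1] := by rw [inv_mul_cancel₀ h2]
        have hW' : W = pt ![(u 2)⁻¹ * u 0, (u 2)⁻¹ * u 1, 1] := by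
          rw [hWu, ← pt_def, ← pt_smul_eq ((u 2)⁻¹) (inv_ne_zero h2), hvec]
        have hveq : (⟨W, Or.inl h⟩ : {W : Submodule F (Fin 3 → F) //
            Module.finrank F W = 1 ∨ Module.finrank F W = 2}) =
            ⟨pt ![(u 2)⁻¹ * u 0, (u 2)⁻¹ * u 1, 1], Or.inl (aff_rank _ _)⟩ := Subtype.ext hW'
        rw [hveq]
        exact hfaff _ _
    -- every rank-2 vertex is fixed
    have hfixln : ∀ (W : Submodule F (Fin 3 → F)) (h : Module.finrank F W = 2),
        σ ⟨W, Or.inr h⟩ = ⟨W, Or.inr h⟩ := by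
      intro W h
      obtain ⟨u, v, hu, hv, hne, hleu, hlev⟩ := exists_two_points h
      have hru : Module.finrank F (F ∙ u : Submodule F (Fin 3 → F)) = 1 :=
        pt_def u ▸ pt_rank hu
      have hrv : Module.finrank F (F ∙ v : Submodule F (Fin 3 → F)) = 1 :=
        pt_def v ▸ pt_rank hv
      exact hjoin (F ∙ u) (F ∙ v) W hru hrv h hne hleu hlev
        (hfixpt _ hru) (hfixpt _ hrv)
    -- conclude
    apply Equiv.ext
    intro v
    obtain ⟨W, hW⟩ := v
    show σ ⟨W, hW⟩ = ⟨W, hW⟩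
    rcases hW with h1 | h2
    · exact hfixpt W h1
    · exact hfixln W h2
  · intro v hv
    show col v = 2
    simp only [col, hv]
    norm_num
  · intro v hv
    show col v ≠ 2
    simp only [col, hv]
    norm_num
    split_ifs <;> decide
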